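/- arXiv:0908.1967 — 11 statements merged into one kernel-verified Lean document; each statement's English description precedes it below -/
import Mathlib

section
/- For a standard word w of length n and index i with 1 ≤ i ≤ n-1, the following are equivalent: (a) cocharge(w s_i) = cocharge(w), and (b) |w_i - w_{i+1}| ≠ 1, where w s_i denotes the word obtained from w by swapping the entries in positions i and i+1. -/
/-- `w` is a standard word of length `n`: a permutation of `1, …, n`. -/
def IsStandardWord (n : ℕ) (w : List ℕ) : Prop :=
  w.Perm ((List.range n).map (· + 1))

/-- The cocharge label of the entry `i` of the standard word `w`:
the entry `1` is labeled `0`, and the entry `i+1` gets the label of `i`,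
incremented by `1` exactly when `i+1` appears to the left of `i` in `w`. -/
def entryLabel (w : List ℕ) : ℕ → ℕ
  | 0 => 0
  | 1 => 0
  | i + 2 => entryLabel w (i + 1) + (if w.idxOf (i + 2) < w.idxOf (i + 1) then 1 else 0)

/-- The cocharge labeling of `w`: each letter of `w` is replaced by its label. -/
def cochargeLabeling (w : List ℕ) : List ℕ := w.map (entryLabel w)

/-- The cocharge of `w`: the sum of the entries of its cocharge labeling. -/
def cocharge (w : List ℕ) : ℕ := (cochargeLabeling w).sum

/-- Swap the entries of `w` in (0-indexed) positions `j` and `j+1`. -/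
def swapAdj (w : List ℕ) (j : ℕ) : List ℕ :=
  (w.set j (w.getD (j + 1) 0)).set (j + 1) (w.getD j 0)


section Aux

lemma length_swapAdj (w : List ℕ) (j : ℕ) : (swapAdj w j).length = w.length := by
  simp [swapAdj]

lemma getElem_idx_congr {w : List ℕ} {p q : ℕ} (h : p = q) (hp : p < w.length) :
    w[p]'hp = w[q]'(h ▸ hp) := by subst h; rfl

lemma getElem_swapAdj (w : List ℕ) (j : ℕ) (hj : j + 1 < w.length) (k : ℕ) (hk : k < w.length) :
    (swapAdj w j)[k]'(by simpa [length_swapAdj] using hk) =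
      if k = j then w[j+1]'hj else if k = j+1 then w[j]'(by omega) else w[k]'hk := by
  have hj' : j < w.length := by omega
  simp only [swapAdj, List.getD_eq_getElem w 0 hj, List.getD_eq_getElem w 0 hj',
    List.getElem_set]
  split_ifs <;> first | rfl | (exfalso; omega) | (exact getElem_idx_congr (by omega) _)

lemma swapAdj_perm (w : List ℕ) (j : ℕ) (hj : j + 1 < w.length) : (swapAdj w j).Perm w := by
  have hj' : j < w.length := by omega
  rw [List.perm_iff_count]
  intro x
  have h1 : j + 1 < (w.set j (w.getD (j+1) 0)).length := by simpa using hj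
  rw [swapAdj, List.count_set h1, List.count_set hj']
  have hgj : (w.set j (w.getD (j+1) 0))[j+1]'h1 = w[j+1]'hj := by
    rw [List.getElem_set, if_neg (show ¬ j = j + 1 by omega)]
  rw [hgj, List.getD_eq_getElem w 0 hj, List.getD_eq_getElem w 0 hj']
  have hmem : w[j]'hj' ∈ w := List.getElem_mem hj'
  have hcount : w[j]'hj' = x → 1 ≤ List.count x w := by
    intro h; rw [← h]; exact List.count_pos_iff.mpr hmem
  rcases eq_or_ne (w[j]'hj') x with hax | hax <;>
      rcases eq_or_ne (w[j+1]'hj) x with hbx | hbx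
  · have h := hcount hax
    simp [hax, hbx]
    omega
  · have h := hcount hax
    simp [hax, hbx]
    omega
  · simp [hax, hbx]
  · simp [hax, hbx]

lemma indexOf_getElem' {w : List ℕ} (hnd : w.Nodup) {k : ℕ} (hk : k < w.length) :
    w.idxOf (w[k]'hk) = k := by
  have hmem : w[k]'hk ∈ w := List.getElem_mem hk
  have hlt := List.idxOf_lt_length_iff.mpr hmem
  have h2 := List.getElem_idxOf hlt
  exact hnd.getElem_inj_iff.mp h2

lemma indexOf_swapAdj {w : List ℕ} (hnd : w.Nodup) {j : ℕ} (hj : j + 1 < w.length)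
    {k : ℕ} (hk : k < w.length) :
    (swapAdj w j).idxOf (w[k]'hk) = if k = j then j + 1 else if k = j + 1 then j else k := by
  have hnd' : (swapAdj w j).Nodup := ((swapAdj_perm w j hj).nodup_iff).mpr hnd
  have hq' : (if k = j then j + 1 else if k = j + 1 then j else k) < w.length := by
    split_ifs <;> omega
  have hqlen : (if k = j then j + 1 else if k = j + 1 then j else k) < (swapAdj w j).length := by
    rwa [length_swapAdj]
  have hval : (swapAdj w j)[if k = j then j + 1 else if k = j + 1 then j else k]'hqlen
      = w[k]'hk := by
    rw [getElem_swapAdj w j hj _ hq']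
    split_ifs <;> first | rfl | (exfalso; omega) | (exact getElem_idx_congr (by omega) _)
  rw [← hval]
  exact indexOf_getElem' hnd' hqlen

lemma indexOf_swapAdj' {w : List ℕ} (hnd : w.Nodup) {j : ℕ} (hj : j + 1 < w.length)
    {v : ℕ} (hv : v ∈ w) :
    (swapAdj w j).idxOf v =
      if w.idxOf v = j then j + 1 else if w.idxOf v = j + 1 then j else w.idxOf v := by
  have hpv := List.idxOf_lt_length_iff.mpr hv
  have hv' : w[w.idxOf v]'hpv = v := List.getElem_idxOf hpv
  conv_lhs => rw [← hv']
  exact indexOf_swapAdj hnd hj hpv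

lemma indexOf_lt_iff_swapAdj {w : List ℕ} (hnd : w.Nodup) {j : ℕ} (hj : j + 1 < w.length)
    {u v : ℕ} (hu : u ∈ w) (hv : v ∈ w)
    (e1 : ¬(w.idxOf u = j ∧ w.idxOf v = j + 1))
    (e2 : ¬(w.idxOf u = j + 1 ∧ w.idxOf v = j)) :
    ((swapAdj w j).idxOf u < (swapAdj w j).idxOf v ↔ w.idxOf u < w.idxOf v) := by
  rw [indexOf_swapAdj' hnd hj hu, indexOf_swapAdj' hnd hj hv]
  split_ifs <;> omega

lemma swapAdj_swapAdj {w : List ℕ} {j : ℕ} (hj : j + 1 < w.length) :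
    swapAdj (swapAdj w j) j = w := by
  have hl : j + 1 < (swapAdj w j).length := by rwa [length_swapAdj]
  apply List.ext_getElem (by simp [length_swapAdj])
  intro k h1 h2
  rw [getElem_swapAdj (swapAdj w j) j hl k (by rwa [length_swapAdj]),
    getElem_swapAdj w j hj (j+1) hj, getElem_swapAdj w j hj j (by omega),
    getElem_swapAdj w j hj k h2]
  split_ifs <;> first | rfl | (exfalso; omega) | (exact getElem_idx_congr (by omega) _)

lemma standard_length {n : ℕ} {w : List ℕ} (hw : IsStandardWord n w) : w.length = n := by
  rw [hw.length_eq]; simp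

lemma standard_nodup {n : ℕ} {w : List ℕ} (hw : IsStandardWord n w) : w.Nodup := by
  refine hw.nodup_iff.mpr ?_
  exact (List.nodup_range (n := n)).map (fun a b h => by omega)

lemma standard_mem {n : ℕ} {w : List ℕ} (hw : IsStandardWord n w) (v : ℕ) :
    v ∈ w ↔ 1 ≤ v ∧ v ≤ n := by
  rw [hw.mem_iff]
  simp only [List.mem_map, List.mem_range]
  constructor
  · rintro ⟨a, ha, rfl⟩; omega
  · rintro ⟨h1, h2⟩; exact ⟨v - 1, by omega, by omega⟩

lemma entryLabel_swapAdj_of_far {n : ℕ} {w : List ℕ} (hw : IsStandardWord n w) {j : ℕ}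
    (hj : j + 1 < w.length) {a b : ℕ}
    (idxa : w.idxOf a = j) (idxb : w.idxOf b = j + 1)
    (ha : a ∈ w) (hb : b ∈ w)
    (hfar1 : a + 1 ≠ b) (hfar2 : b + 1 ≠ a) :
    ∀ m : ℕ, m + 1 ≤ n → entryLabel (swapAdj w j) (m + 1) = entryLabel w (m + 1) := by
  have hnd := standard_nodup hw
  intro m
  induction m with
  | zero => intro _; rfl
  | succ m ih =>
    intro hm
    have hu : m + 2 ∈ w := (standard_mem hw _).mpr ⟨by omega, by omega⟩
    have hv : m + 1 ∈ w := (standard_mem hw _).mpr ⟨by omega, by omega⟩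
    have e1 : ¬(w.idxOf (m + 2) = j ∧ w.idxOf (m + 1) = j + 1) := by
      rintro ⟨p, q⟩
      have h1 : m + 2 = a := ((List.idxOf_inj hu).mp (by omega))
      have h2 : m + 1 = b := ((List.idxOf_inj hv).mp (by omega))
      omega
    have e2 : ¬(w.idxOf (m + 2) = j + 1 ∧ w.idxOf (m + 1) = j) := by
      rintro ⟨p, q⟩
      have h1 : m + 2 = b := ((List.idxOf_inj hu).mp (by omega))
      have h2 : m + 1 = a := ((List.idxOf_inj hv).mp (by omega))
      omega
    have hiff := indexOf_lt_iff_swapAdj hnd hj hu hv e1 e2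
    simp only [entryLabel]
    rw [ih (by omega), if_congr hiff rfl rfl]

lemma entryLabel_swapAdj_of_succ {n : ℕ} {w : List ℕ} (hw : IsStandardWord n w) {j : ℕ}
    (hj : j + 1 < w.length) {a : ℕ}
    (idxa : w.idxOf a = j) (idxb : w.idxOf (a + 1) = j + 1)
    (ha : a ∈ w) (hb : a + 1 ∈ w) :
    ∀ m : ℕ, m + 1 ≤ n →
      entryLabel (swapAdj w j) (m + 1) =
        entryLabel w (m + 1) + (if a + 1 ≤ m + 1 then 1 else 0) := by
  have hnd := standard_nodup hw
  have ha1 : 1 ≤ a := ((standard_mem hw _).mp ha).1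
  intro m
  induction m with
  | zero =>
    intro _
    rw [if_neg (by omega)]
    rfl
  | succ m ih =>
    intro hm
    have hu : m + 2 ∈ w := (standard_mem hw _).mpr ⟨by omega, by omega⟩
    have hv : m + 1 ∈ w := (standard_mem hw _).mpr ⟨by omega, by omega⟩
    simp only [entryLabel]
    rw [ih (by omega)]
    by_cases hcase : m + 1 = a
    · -- the swapped pair: m+1 = a at position j, m+2 = a+1 at position j+1
      have hq2 : m + 2 = a + 1 := by omega
      have hidx1 : w.idxOf (m + 2) = j + 1 := by rw [hq2]; exact idxb
      have hidx2 : w.idxOf (m + 1) = j := by rw [hcase]; exact idxa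
      have hidx1' : (swapAdj w j).idxOf (m + 2) = j := by
        rw [indexOf_swapAdj' hnd hj hu, hidx1, if_neg (by omega), if_pos rfl]
      have hidx2' : (swapAdj w j).idxOf (m + 1) = j + 1 := by
        rw [indexOf_swapAdj' hnd hj hv, hidx2, if_pos rfl]
      rw [hidx1, hidx2, hidx1', hidx2',
        if_neg (show ¬ (a + 1 ≤ m + 1) by omega),
        if_pos (show j < j + 1 by omega),
        if_neg (show ¬ (j + 1 < j) by omega),
        if_pos (show a + 1 ≤ m + 1 + 1 by omega)]
    · have e1 : ¬(w.idxOf (m + 2) = j ∧ w.idxOf (m + 1) = j + 1) := by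
        rintro ⟨p, q⟩
        have h1 : m + 2 = a := ((List.idxOf_inj hu).mp (by omega))
        have h2 : m + 1 = a + 1 := ((List.idxOf_inj hv).mp (by omega))
        omega
      have e2 : ¬(w.idxOf (m + 2) = j + 1 ∧ w.idxOf (m + 1) = j) := by
        rintro ⟨p, q⟩
        have h2 : m + 1 = a := ((List.idxOf_inj hv).mp (by omega))
        omega
      have hiff := indexOf_lt_iff_swapAdj hnd hj hu hv e1 e2
      rw [if_congr hiff rfl rfl]
      have hc : (if a + 1 ≤ m + 1 then (1:ℕ) else 0) =
          (if a + 1 ≤ m + 1 + 1 then (1:ℕ) else 0) := by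
        rcases Nat.lt_or_ge (m + 1) (a + 1) with h | h
        · rw [if_neg (by omega), if_neg (by omega)]
        · rw [if_pos h, if_pos (by omega)]
      rw [hc]
      generalize (if w.idxOf (m + 2) < w.idxOf (m + 1) then (1:ℕ) else 0) = t
      generalize (if a + 1 ≤ m + 1 + 1 then (1:ℕ) else 0) = s
      omega

lemma list_range_map_sum (f : ℕ → ℕ) (n : ℕ) :
    ((List.range n).map f).sum = ∑ k ∈ Finset.range n, f k := by
  induction n with
  | zero => simp
  | succ n ih => rw [List.range_succ]; simp [Finset.sum_range_succ, ih]

lemma cocharge_eq_sum {n : ℕ} {w : List ℕ} (hw : IsStandardWord n w) :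
    cocharge w = ∑ k ∈ Finset.range n, entryLabel w (k + 1) := by
  have h := (hw.map (entryLabel w)).sum_eq
  rw [cocharge, cochargeLabeling, h, List.map_map, ← list_range_map_sum]
  rfl

lemma sum_ite_aux (a n : ℕ) :
    (∑ k ∈ Finset.range n, if a + 1 ≤ k + 1 then (1:ℕ) else 0) = n - a := by
  induction n with
  | zero => simp
  | succ n ih =>
    rw [Finset.sum_range_succ, ih]
    by_cases h : a + 1 ≤ n + 1
    · rw [if_pos h]; omega
    · rw [if_neg h]; omega

lemma cocharge_swapAdj_succ {n : ℕ} {w : List ℕ} (hw : IsStandardWord n w) {j : ℕ}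
    (hj : j + 1 < w.length) {a : ℕ}
    (idxa : w.idxOf a = j) (idxb : w.idxOf (a + 1) = j + 1)
    (ha : a ∈ w) (hb : a + 1 ∈ w) :
    cocharge (swapAdj w j) = cocharge w + (n - a) := by
  have hw' : IsStandardWord n (swapAdj w j) := (swapAdj_perm w j hj).trans hw
  rw [cocharge_eq_sum hw, cocharge_eq_sum hw']
  rw [Finset.sum_congr rfl (fun k hk => entryLabel_swapAdj_of_succ hw hj idxa idxb ha hb k
    (by have := Finset.mem_range.mp hk; omega))]
  rw [Finset.sum_add_distrib, sum_ite_aux]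

end Aux


/-- For a standard word `w` of length `n` and `1 ≤ i ≤ n - 1`, swapping the
entries in positions `i` and `i + 1` preserves cocharge if and only if these
entries do not differ by exactly `1`.  (Positions are 1-indexed; `swapAdj w
(i - 1)` swaps the 1-indexed positions `i` and `i + 1`, whose entries are
`w.getD (i - 1) 0` and `w.getD i 0`.) -/
theorem cocharge_swap_iff (n : ℕ) (w : List ℕ) (hw : IsStandardWord n w)
    (i : ℕ) (hi1 : 1 ≤ i) (hi2 : i ≤ n - 1) :
    cocharge (swapAdj w (i - 1)) = cocharge w ↔
      ((w.getD (i - 1) 0 : ℤ) - (w.getD i 0 : ℤ)).natAbs ≠ 1 := by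
  have hlen : w.length = n := standard_length hw
  have hnd : w.Nodup := standard_nodup hw
  obtain ⟨j, hji⟩ : ∃ j, i = j + 1 := ⟨i - 1, by omega⟩
  subst hji
  simp only [Nat.add_sub_cancel]
  have hn2 : 2 ≤ n := by omega
  have hj : j + 1 < w.length := by omega
  have hj' : j < w.length := by omega
  rw [List.getD_eq_getElem w 0 hj', List.getD_eq_getElem w 0 hj]
  obtain ⟨a, hA⟩ : ∃ a, w[j]'hj' = a := ⟨_, rfl⟩
  obtain ⟨b, hB⟩ : ∃ b, w[j+1]'hj = b := ⟨_, rfl⟩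
  rw [hA, hB]
  have haw : a ∈ w := hA ▸ List.getElem_mem hj'
  have hbw : b ∈ w := hB ▸ List.getElem_mem hj
  have hawn := (standard_mem hw a).mp haw
  have hbwn := (standard_mem hw b).mp hbw
  have idxa : w.idxOf a = j := by rw [← hA]; exact indexOf_getElem' hnd hj'
  have idxb : w.idxOf b = j + 1 := by rw [← hB]; exact indexOf_getElem' hnd hj
  have hw' : IsStandardWord n (swapAdj w j) := (swapAdj_perm w j hj).trans hw
  by_cases hone : ((a : ℤ) - (b : ℤ)).natAbs = 1
  · refine iff_of_false ?_ (fun h => h hone)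
    have hor : a = b + 1 ∨ b = a + 1 := by omega
    rcases hor with h | h
    · -- a = b + 1 : in swapAdj w j, b sits at j and b+1 = a at j+1
      have hj2 : j + 1 < (swapAdj w j).length := by rwa [length_swapAdj]
      have hperm := swapAdj_perm w j hj
      have idxb' : (swapAdj w j).idxOf b = j := by
        rw [indexOf_swapAdj' hnd hj hbw, idxb, if_neg (show ¬ j + 1 = j by omega), if_pos rfl]
      have idxa' : (swapAdj w j).idxOf (b + 1) = j + 1 := by
        rw [← h, indexOf_swapAdj' hnd hj haw, idxa, if_pos rfl]
      have hbw' : b ∈ swapAdj w j := hperm.mem_iff.mpr hbw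
      have haw' : b + 1 ∈ swapAdj w j := by rw [← h]; exact hperm.mem_iff.mpr haw
      have hc := cocharge_swapAdj_succ hw' hj2 idxb' idxa' hbw' haw'
      rw [swapAdj_swapAdj hj] at hc
      intro hEq
      omega
    · -- b = a + 1 : in w, a sits at j and a+1 = b at j+1
      have idxb2 : w.idxOf (a + 1) = j + 1 := by rw [← h]; exact idxb
      have hbw2 : a + 1 ∈ w := h ▸ hbw
      have hc := cocharge_swapAdj_succ hw hj idxa idxb2 haw hbw2
      intro hEq
      omega
  · refine iff_of_true ?_ hone
    rw [cocharge_eq_sum hw, cocharge_eq_sum hw']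
    refine Finset.sum_congr rfl fun k hk => ?_
    exact entryLabel_swapAdj_of_far hw hj idxa idxb haw hbw (by omega) (by omega) k
      (by have := Finset.mem_range.mp hk; omega)
end

section
/- For a standard word w with cocharge labeling z, if |z_i - z_{i+1}| > 1 then swapping positions i and i+1 preserves cocharge, i.e., cocharge(w s_i) = cocharge(w). -/
lemma entryLabel_step (w : List ℕ) (k : ℕ) :
    entryLabel w (k+1) = entryLabel w k ∨ entryLabel w (k+1) = entryLabel w k + 1 := by
  match k with
  | 0 => left; rfl
  | k+1 =>
    rw [entryLabel]
    split <;> simp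


/-- Catabolism transformations preserve cocharge: if the adjacent entries
`z_j, z_{j+1}` (0-indexed) of the cocharge labeling `z` of a standard word `w`
differ by more than `1`, then swapping positions `j` and `j + 1` of `w`
preserves cocharge. -/
theorem cocharge_catabolism_transformation (n : ℕ) (w : List ℕ)
    (hw : IsStandardWord n w) (j : ℕ) (hj : j + 1 < n)
    (h : 1 < (((cochargeLabeling w).getD j 0 : ℤ) -
      ((cochargeLabeling w).getD (j + 1) 0 : ℤ)).natAbs) :
    cocharge (swapAdj w j) = cocharge w := by
  have hlen : w.length = n := by simpa using hw.length_eq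
  have hjw : j + 1 < w.length := by omega
  have hjw0 : j < w.length := by omega
  have hnodup : w.Nodup := by
    refine hw.nodup_iff.mpr ?_
    exact List.Nodup.map (fun a b hab => by omega) List.nodup_range
  set a := w[j]'hjw0 with ha
  set b := w[(j+1)]'hjw with hb
  -- the swapped word, explicitly
  have hgdb : w.getD (j+1) 0 = b := List.getD_eq_getElem w 0 hjw
  have hgda : w.getD j 0 = a := List.getD_eq_getElem w 0 hjw0
  have hdrop : w.drop (j+1) = b :: w.drop (j+2) := List.drop_eq_getElem_cons hjw
  have hw' : swapAdj w j = w.take j ++ b :: a :: w.drop (j+2) := by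
    rw [swapAdj, hgdb, hgda, List.set_eq_take_cons_drop b hjw0, hdrop,
      List.set_append_right _ _ (by rw [List.length_take]; omega)]
    congr 1
    have : j + 1 - (w.take j).length = 1 := by simp [List.length_take]; omega
    rw [this]
    rfl
  have hweq : w = w.take j ++ a :: b :: w.drop (j+2) := by
    conv_lhs => rw [← List.take_append_drop j w, List.drop_eq_getElem_cons hjw0, hdrop]
  set w' := swapAdj w j with hw'def
  have hperm : w'.Perm w := by
    rw [hw']
    conv_rhs => rw [hweq]
    exact (List.Perm.swap a b _).append_left _
  have hnodup' : w'.Nodup := hperm.nodup_iff.mpr hnodup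
  have hlen' : w'.length = w.length := hperm.length_eq
  -- indexOf facts in w
  have hIaw : w.idxOf a = j := List.Nodup.idxOf_getElem hnodup j hjw0
  have hIbw : w.idxOf b = j + 1 := List.Nodup.idxOf_getElem hnodup (j+1) hjw
  have hne : a ≠ b := by
    intro e
    rw [e] at hIaw; omega
  -- getElem of w'
  have hjw' : j < w'.length := by omega
  have hjw1' : j + 1 < w'.length := by omega
  have hw'j : w'[j]'hjw' = b := by
    simp only [hw'def, swapAdj, hgdb, hgda]
    rw [List.getElem_set_ne (by omega), List.getElem_set_self]
  have hw'j1 : w'[(j+1)]'hjw1' = a := by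
    simp only [hw'def, swapAdj, hgdb, hgda]
    rw [List.getElem_set_self]
  -- indexOf facts in w'
  have hIa : w'.idxOf a = j + 1 := by
    have := List.Nodup.idxOf_getElem hnodup' (j+1) hjw1'
    rwa [hw'j1] at this
  have hIb : w'.idxOf b = j := by
    have := List.Nodup.idxOf_getElem hnodup' j hjw'
    rwa [hw'j] at this
  have hoth : ∀ v, v ≠ a → v ≠ b →
      w'.idxOf v = w.idxOf v ∧ w.idxOf v ≠ j ∧ w.idxOf v ≠ j + 1 := by
    intro v hva hvb
    by_cases hv : v ∈ w
    · have hi : w.idxOf v < w.length := List.idxOf_lt_length_iff.mpr hv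
      have hgi : w[w.idxOf v]'hi = v := List.getElem_idxOf hi
      have hij : w.idxOf v ≠ j := by
        intro e
        apply hva
        rw [← hgi, ha]
        congr 1
      have hij1 : w.idxOf v ≠ j + 1 := by
        intro e
        apply hvb
        rw [← hgi, hb]
        congr 1
      refine ⟨?_, hij, hij1⟩
      have hi' : w.idxOf v < w'.length := by omega
      have hg' : w'[w.idxOf v]'hi' = v := by
        simp only [hw'def, swapAdj, hgdb, hgda]
        rw [List.getElem_set_ne (by omega), List.getElem_set_ne (by omega), hgi]
      have h3 := List.Nodup.idxOf_getElem hnodup' (w.idxOf v) hi'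
      rw [hg'] at h3
      exact h3
    · have hv' : v ∉ w' := fun m => hv (hperm.mem_iff.mp m)
      have e1 : w'.idxOf v = w'.length := List.idxOf_eq_length_iff.mpr hv'
      have e2 : w.idxOf v = w.length := List.idxOf_eq_length_iff.mpr hv
      exact ⟨by omega, by omega, by omega⟩
  -- the labels of a and b
  have hz : 1 < ((entryLabel w a : ℤ) - entryLabel w b).natAbs := by
    have h1 : (cochargeLabeling w).getD j 0 = entryLabel w a := by
      rw [cochargeLabeling, List.getD_eq_getElem _ _ (by simpa using hjw0)]
      simp [ha]
    have h2 : (cochargeLabeling w).getD (j+1) 0 = entryLabel w b := by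
      rw [cochargeLabeling, List.getD_eq_getElem _ _ (by simpa using hjw)]
      simp [hb]
    rwa [h1, h2] at h
  have hzn : entryLabel w a + 2 ≤ entryLabel w b ∨ entryLabel w b + 2 ≤ entryLabel w a := by
    omega
  -- a and b are not consecutive
  have hnab : ∀ k : ℕ, ¬(k+2 = a ∧ k+1 = b) ∧ ¬(k+2 = b ∧ k+1 = a) := by
    intro k
    have hs := entryLabel_step w (k+1)
    constructor
    · rintro ⟨e1, e2⟩
      rw [e1, e2] at hs
      omega
    · rintro ⟨e1, e2⟩
      rw [e1, e2] at hs
      omega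
  -- the condition is preserved
  have hcond : ∀ k : ℕ, (w'.idxOf (k+2) < w'.idxOf (k+1)) ↔
      (w.idxOf (k+2) < w.idxOf (k+1)) := by
    intro k
    obtain ⟨hx, hy⟩ := hnab k
    by_cases h2a : k + 2 = a
    · have h1b : k + 1 ≠ b := fun e => hx ⟨h2a, e⟩
      have h1a : k + 1 ≠ a := by omega
      obtain ⟨e, f, g⟩ := hoth (k+1) h1a h1b
      rw [h2a, hIa, hIaw, e]
      omega
    · by_cases h2b : k + 2 = b
      · have h1a : k + 1 ≠ a := fun e => hy ⟨h2b, e⟩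
        have h1b : k + 1 ≠ b := by omega
        obtain ⟨e, f, g⟩ := hoth (k+1) h1a h1b
        rw [h2b, hIb, hIbw, e]
        omega
      · obtain ⟨e2, f2, g2⟩ := hoth (k+2) h2a h2b
        by_cases h1a : k + 1 = a
        · rw [h1a, hIa, hIaw, e2]
          omega
        · by_cases h1b : k + 1 = b
          · rw [h1b, hIb, hIbw, e2]
            omega
          · obtain ⟨e1, f1, g1⟩ := hoth (k+1) h1a h1b
            rw [e1, e2]
  -- labels are preserved
  have hEL : ∀ i, entryLabel w' i = entryLabel w i := by
    intro i
    induction i using Nat.strong_induction_on with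
    | _ i ih =>
      match i with
      | 0 => rfl
      | 1 => rfl
      | k+2 =>
        rw [entryLabel, entryLabel, ih (k+1) (by omega)]
        congr 1
        simp only [hcond k]
  show cocharge w' = cocharge w
  unfold cocharge cochargeLabeling
  rw [funext hEL]
  exact (hperm.map (entryLabel w)).sum_eq
end

section
/- A standard word is uniquely determined by its cocharge labeling; that is, if two standard words of the same length have equal cocharge labelings, they are equal. -/
lemma std_len {n : ℕ} {w : List ℕ} (h : IsStandardWord n w) : w.length = n := by
  simpa using h.length_eq

lemma std_nodup {n : ℕ} {w : List ℕ} (h : IsStandardWord n w) : w.Nodup := by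
  refine h.nodup_iff.mpr ?_
  exact (List.nodup_range (n := n)).map (fun a b hab => by omega)

lemma std_mem {n : ℕ} {w : List ℕ} (h : IsStandardWord n w) {x : ℕ} :
    x ∈ w ↔ 1 ≤ x ∧ x ≤ n := by
  rw [h.mem_iff]
  simp only [List.mem_map, List.mem_range]
  constructor
  · rintro ⟨a, ha, rfl⟩; omega
  · rintro ⟨h1, h2⟩; exact ⟨x - 1, by omega, by omega⟩

lemma f_step {n : ℕ} {w : List ℕ} (h : IsStandardWord n w) {i : ℕ} (h1 : 1 ≤ i)
    (h2 : i + 1 ≤ n) :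
    entryLabel w i * n + w.idxOf i < entryLabel w (i + 1) * n + w.idxOf (i + 1) := by
  obtain ⟨m, rfl⟩ : ∃ m, i = m + 1 := ⟨i - 1, by omega⟩
  have hi : (m + 1) ∈ w := (std_mem h).mpr ⟨by omega, by omega⟩
  have hi1 : (m + 2) ∈ w := (std_mem h).mpr ⟨by omega, by omega⟩
  have p1 : w.idxOf (m + 1) < n := (std_len h) ▸ List.idxOf_lt_length_iff.mpr hi
  have p2 : w.idxOf (m + 2) < n := (std_len h) ▸ List.idxOf_lt_length_iff.mpr hi1
  have pne : w.idxOf (m + 1) ≠ w.idxOf (m + 2) := by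
    intro e
    have := (List.idxOf_inj hi).mp e
    omega
  show entryLabel w (m + 1) * n + w.idxOf (m + 1)
      < entryLabel w (m + 2) * n + w.idxOf (m + 2)
  rw [show entryLabel w (m + 2)
      = entryLabel w (m + 1) + (if w.idxOf (m + 2) < w.idxOf (m + 1) then 1 else 0)
      from rfl]
  split
  · rw [add_mul, one_mul]
    omega
  · rw [add_mul, zero_mul, add_zero]
    omega

lemma f_mono {n : ℕ} {w : List ℕ} (h : IsStandardWord n w) {i j : ℕ} (h1 : 1 ≤ i)
    (hij : i < j) (hj : j ≤ n) :
    entryLabel w i * n + w.idxOf i < entryLabel w j * n + w.idxOf j := by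
  induction j with
  | zero => omega
  | succ k ih =>
    rcases Nat.lt_or_ge i k with hk | hk
    · exact lt_trans (ih hk (by omega)) (f_step h (by omega) hj)
    · have : i = k := by omega
      subst this
      exact f_step h h1 hj

lemma f_lt_iff {n : ℕ} {w : List ℕ} (h : IsStandardWord n w) {a b : ℕ}
    (ha : 1 ≤ a ∧ a ≤ n) (hb : 1 ≤ b ∧ b ≤ n) :
    entryLabel w a * n + w.idxOf a < entryLabel w b * n + w.idxOf b ↔ a < b := by
  constructor
  · intro hf
    by_contra hab
    push_neg at hab
    rcases Nat.lt_or_ge b a with hba | hba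
    · exact absurd hf (not_lt.mpr (le_of_lt (f_mono h hb.1 hba ha.2)))
    · have : a = b := by omega
      subst this; omega
  · intro hab
    exact f_mono h ha.1 hab hb.2

lemma label_at {n : ℕ} {w : List ℕ} (h : IsStandardWord n w) {q : ℕ} (hq : q < n) :
    (cochargeLabeling w).getD q 0 = entryLabel w (w.getD q 0) := by
  have hq' : q < w.length := (std_len h) ▸ hq
  have hq'' : q < (cochargeLabeling w).length := by
    simp [cochargeLabeling, hq']
  rw [List.getD_eq_getElem _ _ hq'', List.getD_eq_getElem _ _ hq']
  simp [cochargeLabeling]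

lemma indexOf_at {n : ℕ} {w : List ℕ} (h : IsStandardWord n w) {q : ℕ} (hq : q < n) :
    w.idxOf (w.getD q 0) = q := by
  have hq' : q < w.length := (std_len h) ▸ hq
  rw [List.getD_eq_getElem _ _ hq']
  exact List.Nodup.idxOf_getElem (std_nodup h) q hq'

lemma entry_mem {n : ℕ} {w : List ℕ} (h : IsStandardWord n w) {q : ℕ} (hq : q < n) :
    1 ≤ w.getD q 0 ∧ w.getD q 0 ≤ n := by
  have hq' : q < w.length := (std_len h) ▸ hq
  rw [List.getD_eq_getElem _ _ hq']
  exact (std_mem h).mp (List.getElem_mem hq')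

lemma get_eq_count {n : ℕ} {w : List ℕ} (h : IsStandardWord n w) {p : ℕ} (hp : p < n) :
    w.getD p 0 = 1 + ((Finset.range n).filter
      (fun q => (cochargeLabeling w).getD q 0 * n + q
        < (cochargeLabeling w).getD p 0 * n + p)).card := by
  have hfilter : (Finset.range n).filter
      (fun q => (cochargeLabeling w).getD q 0 * n + q
        < (cochargeLabeling w).getD p 0 * n + p)
      = (Finset.range n).filter (fun q => w.getD q 0 < w.getD p 0) := by
    apply Finset.filter_congr
    intro q hq
    have hq' : q < n := Finset.mem_range.mp hq
    have key := f_lt_iff h (entry_mem h hq') (entry_mem h hp)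
    rw [indexOf_at h hq', indexOf_at h hp] at key
    simp only [label_at h hq', label_at h hp, eq_iff_iff]
    exact key
  rw [hfilter]
  have hcard : ((Finset.range n).filter (fun q => w.getD q 0 < w.getD p 0)).card
      = (Finset.Ico 1 (w.getD p 0)).card := by
    apply Finset.card_bij (fun q _ => w.getD q 0)
    · intro a ha
      simp only [Finset.mem_filter, Finset.mem_range] at ha
      exact Finset.mem_Ico.mpr ⟨(entry_mem h ha.1).1, ha.2⟩
    · intro a ha b hb hab
      simp only [Finset.mem_filter, Finset.mem_range] at ha hb
      calc a = w.idxOf (w.getD a 0) := (indexOf_at h ha.1).symm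
        _ = w.idxOf (w.getD b 0) := by rw [hab]
        _ = b := indexOf_at h hb.1
    · intro b hb
      rw [Finset.mem_Ico] at hb
      have hbn : b ≤ n := le_trans (le_of_lt hb.2) (entry_mem h hp).2
      have hbw : b ∈ w := (std_mem h).mpr ⟨hb.1, hbn⟩
      have h1 : w.idxOf b < n := (std_len h) ▸ List.idxOf_lt_length_iff.mpr hbw
      have h2 : w.getD (w.idxOf b) 0 = b := by
        rw [List.getD_eq_getElem _ _ (List.idxOf_lt_length_iff.mpr hbw)]
        exact List.getElem_idxOf _
      refine ⟨w.idxOf b, ?_, h2⟩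
      simp only [Finset.mem_filter, Finset.mem_range]
      refine ⟨h1, ?_⟩
      rw [h2]
      exact hb.2
  rw [hcard, Nat.card_Ico]
  have := (entry_mem h hp).1
  omega

/-- A standard word is determined by its cocharge labeling. -/
theorem eq_of_cochargeLabeling_eq (n : ℕ) (u v : List ℕ)
    (hu : IsStandardWord n u) (hv : IsStandardWord n v)
    (h : cochargeLabeling u = cochargeLabeling v) : u = v := by
  have hlu := std_len hu
  have hlv := std_len hv
  apply List.ext_getElem (by omega)
  intro p h1 h2
  have hp : p < n := hlu ▸ h1
  have e1 := get_eq_count hu hp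
  have e2 := get_eq_count hv hp
  rw [h] at e1
  have e3 : u.getD p 0 = v.getD p 0 := e1.trans e2.symm
  rwa [List.getD_eq_getElem _ _ h1, List.getD_eq_getElem _ _ h2] at e3
end

section
/- If v = aw is a corotation of u = wa (with a ≠ 1, w a word, a a number), and in the cocharge labeling of u the final entry a is labeled by the number c, then the cocharge labeling of v equals (c+1) followed by the cocharge labeling of u with its last entry removed; in particular cocharge(v) = cocharge(u) + 1. -/
section Aux

variable {n : ℕ} {w : List ℕ} {a : ℕ}

lemma mem_u_iff (hu : IsStandardWord n (w ++ [a])) :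
    ∀ x, x ∈ w ++ [a] ↔ 1 ≤ x ∧ x ≤ n := by
  intro x
  rw [hu.mem_iff]
  simp only [List.mem_map, List.mem_range]
  constructor
  · rintro ⟨k, hk, rfl⟩; omega
  · rintro ⟨h1, h2⟩; exact ⟨x - 1, by omega, by omega⟩

lemma a_not_mem (hu : IsStandardWord n (w ++ [a])) : a ∉ w := by
  have hnd : (w ++ [a]).Nodup := by
    refine hu.symm.nodup ?_
    exact (List.nodup_range (n := n)).map (fun x y => by omega)
  intro hmem
  have := List.disjoint_of_nodup_append hnd hmem (by simp)
  simp at this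

lemma key_label (hu : IsStandardWord n (w ++ [a])) (ha : a ≠ 1) :
    ∀ i, i + 1 ≤ n →
      entryLabel (a :: w) (i + 1)
        = entryLabel (w ++ [a]) (i + 1) + (if i + 1 = a then 1 else 0) := by
  have hmem := mem_u_iff hu
  have haw := a_not_mem hu
  have ha2 : 2 ≤ a := by
    have := (hmem a).mp (by simp)
    omega
  have han : a ≤ n := ((hmem a).mp (by simp)).2
  have hxw : ∀ x, 1 ≤ x → x ≤ n → x ≠ a → x ∈ w := by
    intro x h1 h2 hxa
    have := (hmem x).mpr ⟨h1, h2⟩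
    rcases List.mem_append.mp this with h | h
    · exact h
    · simp at h; omega
  have iua : (w ++ [a]).idxOf a = w.length := by
    rw [List.idxOf_append_of_notMem haw]; simp
  have iux : ∀ x ∈ w, (w ++ [a]).idxOf x = w.idxOf x :=
    fun x hx => List.idxOf_append_of_mem hx
  have ivx : ∀ x, x ≠ a → (a :: w).idxOf x = w.idxOf x + 1 := by
    intro x hx
    exact List.idxOf_cons_ne w (by simpa using (Ne.symm hx))
  have iva : (a :: w).idxOf a = 0 := by simp
  intro i
  induction i with
  | zero =>
    intro _
    have : (1:ℕ) ≠ a := by omega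
    simp [entryLabel, if_neg this]
  | succ i ih =>
    intro hle
    have hle' : i + 1 ≤ n := by omega
    have ihv := ih hle'
    show entryLabel (a :: w) (i + 2) = entryLabel (w ++ [a]) (i + 2) + _
    rw [entryLabel, entryLabel]
    by_cases hA : i + 2 = a
    · -- case i+2 = a
      have hprev : i + 1 ≠ a := by omega
      have hpw : i + 1 ∈ w := hxw _ (by omega) hle' hprev
      have h1 : (a :: w).idxOf (i + 2) = 0 := by rw [hA]; exact iva
      have h2 : (a :: w).idxOf (i + 1) = w.idxOf (i + 1) + 1 := ivx _ hprev
      have h3 : (w ++ [a]).idxOf (i + 2) = w.length := by rw [hA]; exact iua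
      have h4 : (w ++ [a]).idxOf (i + 1) = w.idxOf (i + 1) := iux _ hpw
      have h5 : w.idxOf (i + 1) < w.length := List.idxOf_lt_length_iff.mpr hpw
      rw [h1, h2, h3, h4, ihv, if_neg hprev, if_pos hA, if_pos (by omega),
        if_neg (by omega)]
    · by_cases hB : i + 1 = a
      · -- case i+1 = a
        have hcw : i + 2 ∈ w := hxw _ (by omega) hle hA
        have h1 : (a :: w).idxOf (i + 2) = w.idxOf (i + 2) + 1 := ivx _ hA
        have h2 : (a :: w).idxOf (i + 1) = 0 := by rw [hB]; exact iva
        have h3 : (w ++ [a]).idxOf (i + 2) = w.idxOf (i + 2) := iux _ hcw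
        have h4 : (w ++ [a]).idxOf (i + 1) = w.length := by rw [hB]; exact iua
        have h5 : w.idxOf (i + 2) < w.length := List.idxOf_lt_length_iff.mpr hcw
        rw [h1, h2, h3, h4, ihv, if_pos hB, if_neg hA, if_neg (by omega),
          if_pos (by omega)]
      · -- generic case
        have hpw : i + 1 ∈ w := hxw _ (by omega) hle' hB
        have hcw : i + 2 ∈ w := hxw _ (by omega) hle hA
        have h1 : (a :: w).idxOf (i + 2) = w.idxOf (i + 2) + 1 := ivx _ hA
        have h2 : (a :: w).idxOf (i + 1) = w.idxOf (i + 1) + 1 := ivx _ hB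
        have h3 : (w ++ [a]).idxOf (i + 2) = w.idxOf (i + 2) := iux _ hcw
        have h4 : (w ++ [a]).idxOf (i + 1) = w.idxOf (i + 1) := iux _ hpw
        rw [h1, h2, h3, h4, ihv, if_neg hB, if_neg hA]
        by_cases h : w.idxOf (i + 2) < w.idxOf (i + 1)
        · rw [if_pos h, if_pos (by omega)]
        · rw [if_neg h, if_neg (by omega)]

end Aux

/-- If `v = a :: w` is a corotation of the standard word `u = w ++ [a]`
(so `a ≠ 1`), and the last entry `a` of `u` is labeled `c` in the cocharge
labeling of `u`, then the cocharge labeling of `v` is `c + 1` followed by the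
cocharge labeling of `u` with its last entry removed; in particular
`cocharge v = cocharge u + 1`. -/
theorem cochargeLabeling_corotation (n : ℕ) (w : List ℕ) (a : ℕ) (c : ℕ)
    (hu : IsStandardWord n (w ++ [a])) (ha : a ≠ 1)
    (hc : (cochargeLabeling (w ++ [a])).getLastD 0 = c) :
    cochargeLabeling (a :: w) = (c + 1) :: (cochargeLabeling (w ++ [a])).dropLast ∧
      cocharge (a :: w) = cocharge (w ++ [a]) + 1 := by
  have hmem := mem_u_iff hu
  have key := key_label hu ha
  have ha2 : 2 ≤ a := by
    have := (hmem a).mp (by simp)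
    omega
  have han : a ≤ n := ((hmem a).mp (by simp)).2
  set fu := entryLabel (w ++ [a]) with hfu
  set fv := entryLabel (a :: w) with hfv
  have hulab : cochargeLabeling (w ++ [a]) = w.map fu ++ [fu a] := by
    simp [cochargeLabeling, hfu]
  have hca : fu a = c := by
    rw [hulab] at hc
    rwa [List.getLastD_concat] at hc
  have hva : fv a = fu a + 1 := by
    obtain ⟨b, rfl⟩ : ∃ b, a = b + 1 := ⟨a - 1, by omega⟩
    have := key b (by omega)
    rwa [if_pos rfl] at this
  have hmap : w.map fv = w.map fu := by
    apply List.map_congr_left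
    intro x hx
    have hx' := (hmem x).mp (List.mem_append.mpr (Or.inl hx))
    have hxa : x ≠ a := by
      intro h; subst h; exact a_not_mem hu hx
    obtain ⟨b, rfl⟩ : ∃ b, x = b + 1 := ⟨x - 1, by omega⟩
    have := key b (by omega)
    rwa [if_neg hxa, add_zero] at this
  have hmain : cochargeLabeling (a :: w)
      = (c + 1) :: (cochargeLabeling (w ++ [a])).dropLast := by
    rw [hulab, List.dropLast_concat]
    show fv a :: w.map fv = (c + 1) :: w.map fu
    rw [hva, hca, hmap]
  refine ⟨hmain, ?_⟩
  unfold cocharge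
  rw [hmain, hulab]
  simp [List.dropLast_concat, hca]
  omega
end

section
/- The catabolism insertion algorithm terminates: starting from (z, ∅) where z is the cocharge labeling of a standard word of length n and repeatedly applying f, the word component becomes empty after at most n + n(n-1)/2 steps. -/
/-- `ν` is a partition, presented as its (0-indexed) sequence of parts:
weakly decreasing with finitely many nonzero parts. -/
def IsPartitionFn (ν : ℕ → ℕ) : Prop :=
  (∀ i, ν (i + 1) ≤ ν i) ∧ ∃ N, ∀ i, N ≤ i → ν i = 0

/-- `incr ν a` is `ν + ε_{a+1}`: increment the part of (1-indexed) index `a+1`,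
i.e. the part with 0-indexed index `a`. -/
def incr (ν : ℕ → ℕ) (a : ℕ) : ℕ → ℕ := fun i => if i = a then ν a + 1 else ν i

open Classical in
/-- One step of the catabolism insertion algorithm: present the last letter `a`
of the word to the partition; insert it if `ν + ε_{a+1}` is a partition,
and otherwise corotate, prepending `a + 1` to the word. -/
noncomputable def step (s : List ℕ × (ℕ → ℕ)) : List ℕ × (ℕ → ℕ) :=
  match s.1.getLast? with
  | none => s
  | some a =>
      if IsPartitionFn (incr s.2 a) then (s.1.dropLast, incr s.2 a)
      else ((a + 1) :: s.1.dropLast, s.2)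

/-- The catabolism insertion algorithm, run on the standard word `w` starting
from `(cochargeLabeling w, ∅)`, terminates with empty word and partition `ν`;
i.e. `F w = ν`. -/
def Outputs (w : List ℕ) (ν : ℕ → ℕ) : Prop :=
  ∃ k : ℕ, step^[k] (cochargeLabeling w, fun _ => 0) = ([], ν)

/-! ### Auxiliary machinery for the termination proof -/

namespace CatabolismAux

/-- triangular number as a Gauss sum -/
def tri (n : ℕ) : ℕ := ∑ i ∈ Finset.range n, i

lemma tri_succ (n : ℕ) : tri (n + 1) = tri n + n := Finset.sum_range_succ _ _

lemma two_tri (n : ℕ) : tri n * 2 = n * (n - 1) := Finset.sum_range_id_mul_two n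

lemma tri_add_le (m k : ℕ) : tri m + m * k + tri k ≤ tri (m + k) := by
  induction k with
  | zero => simp [tri]
  | succ k ih =>
      have h1 : m + (k+1) = (m+k) + 1 := by omega
      rw [h1, tri_succ, tri_succ]
      have : m * (k+1) = m * k + m := by ring
      omega

/-- size of the partition (sum of parts up to `ℓ`) -/
def Bsum (ν : ℕ → ℕ) (ℓ : ℕ) : ℕ := ∑ i ∈ Finset.range ℓ, ν i

/-- weighted size `∑ i·ν i` -/
def nBsum (ν : ℕ → ℕ) (ℓ : ℕ) : ℕ := ∑ i ∈ Finset.range ℓ, i * ν i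

lemma le_Bsum (ν : ℕ → ℕ) (ℓ : ℕ) (hpos : ∀ i, i < ℓ → 0 < ν i) : ℓ ≤ Bsum ν ℓ := by
  have : ∑ i ∈ Finset.range ℓ, 1 ≤ ∑ i ∈ Finset.range ℓ, ν i :=
    Finset.sum_le_sum fun i hi => hpos i (Finset.mem_range.1 hi)
  simpa [Bsum] using this

lemma incr_apply (ν : ℕ → ℕ) (a i : ℕ) :
    incr ν a i = ν i + (if i = a then 1 else 0) := by
  unfold incr
  split <;> simp_all

lemma Bsum_incr_lt (ν : ℕ → ℕ) {a ℓ : ℕ} (h : a < ℓ) :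
    Bsum (incr ν a) ℓ = Bsum ν ℓ + 1 := by
  unfold Bsum
  rw [Finset.sum_congr rfl fun i _ => incr_apply ν a i, Finset.sum_add_distrib,
    Finset.sum_ite_eq' (Finset.range ℓ) a (fun _ => 1)]
  simp [Finset.mem_range.2 h]

lemma nBsum_incr_lt (ν : ℕ → ℕ) {a ℓ : ℕ} (h : a < ℓ) :
    nBsum (incr ν a) ℓ = nBsum ν ℓ + a := by
  unfold nBsum
  have : ∀ i ∈ Finset.range ℓ, i * incr ν a i = i * ν i + (if i = a then i else 0) := by
    intro i _
    rw [incr_apply]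
    split <;> simp_all [Nat.mul_add]
  rw [Finset.sum_congr rfl this, Finset.sum_add_distrib,
    Finset.sum_ite_eq' (Finset.range ℓ) a (fun i => i)]
  simp [Finset.mem_range.2 h]

lemma Bsum_incr_eq (ν : ℕ → ℕ) {ℓ : ℕ} (hz : ν ℓ = 0) :
    Bsum (incr ν ℓ) (ℓ + 1) = Bsum ν ℓ + 1 := by
  unfold Bsum
  rw [Finset.sum_range_succ]
  have h1 : ∀ i ∈ Finset.range ℓ, incr ν ℓ i = ν i := by
    intro i hi
    have : i ≠ ℓ := by have := Finset.mem_range.1 hi; omega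
    simp [incr, this]
  rw [Finset.sum_congr rfl h1]
  simp [incr, hz]

lemma nBsum_incr_eq (ν : ℕ → ℕ) {ℓ : ℕ} (hz : ν ℓ = 0) :
    nBsum (incr ν ℓ) (ℓ + 1) = nBsum ν ℓ + ℓ := by
  unfold nBsum
  rw [Finset.sum_range_succ]
  have h1 : ∀ i ∈ Finset.range ℓ, i * incr ν ℓ i = i * ν i := by
    intro i hi
    have : i ≠ ℓ := by have := Finset.mem_range.1 hi; omega
    simp [incr, this]
  rw [Finset.sum_congr rfl h1]
  simp [incr, hz]

/-- decomposing a concat equation -/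
lemma split_concat {u v y : List ℕ} {a : ℕ} (h : u ++ v = y ++ [a]) (hv : v ≠ []) :
    ∃ v', v = v' ++ [a] ∧ y = u ++ v' := by
  obtain ⟨v', b, rfl⟩ := v.eq_nil_or_concat.resolve_left hv
  rw [List.concat_eq_append] at *
  rw [← List.append_assoc] at h
  have hb : b = a := by
    have := congrArg List.getLast? h
    simpa [List.getLast?_concat] using this
  subst hb
  exact ⟨v', rfl, (List.append_cancel_right h).symm⟩

lemma step_pos {y : List ℕ} {a : ℕ} {ν : ℕ → ℕ} (h : IsPartitionFn (incr ν a)) :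
    step (y ++ [a], ν) = (y, incr ν a) := by
  simp [step, List.getLast?_concat, List.dropLast_concat, h]

lemma step_neg {y : List ℕ} {a : ℕ} {ν : ℕ → ℕ} (h : ¬ IsPartitionFn (incr ν a)) :
    step (y ++ [a], ν) = ((a + 1) :: y, ν) := by
  simp [step, List.getLast?_concat, List.dropLast_concat, h]

/-- a letter beyond the number of parts cannot be inserted -/
lemma not_insert_beyond {ν : ℕ → ℕ} {ℓ a : ℕ} (hzero : ∀ i, ℓ ≤ i → ν i = 0)
    (hal : ℓ < a) : ¬ IsPartitionFn (incr ν a) := by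
  rintro ⟨h1, -⟩
  have h2 := h1 (a - 1)
  have ha1 : a - 1 + 1 = a := by omega
  rw [ha1] at h2
  have hne : a - 1 ≠ a := by omega
  have e1 : incr ν a a = ν a + 1 := by simp [incr]
  have e2 : incr ν a (a - 1) = ν (a - 1) := by simp [incr, hne]
  have z1 : ν a = 0 := hzero a (by omega)
  have z2 : ν (a - 1) = 0 := hzero (a - 1) (by omega)
  omega

/-- the letter `ℓ` (current number of parts) is always insertable -/
lemma insert_top {ν : ℕ → ℕ} {ℓ : ℕ} (hdec : ∀ i, ν (i + 1) ≤ ν i)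
    (hpos : ∀ i, i < ℓ → 0 < ν i) (hzero : ∀ i, ℓ ≤ i → ν i = 0) :
    IsPartitionFn (incr ν ℓ) := by
  constructor
  · intro i
    rw [incr_apply, incr_apply]
    by_cases h1 : i + 1 = ℓ
    · have h2 : i ≠ ℓ := by omega
      rw [if_pos h1, if_neg h2]
      have := hpos i (by omega)
      have hz : ν (i + 1) = 0 := hzero (i + 1) (by omega)
      omega
    · by_cases h2 : i = ℓ
      · rw [if_neg h1, if_pos h2]
        have hz : ν (i + 1) = 0 := hzero (i + 1) (by omega)
        omega
      · rw [if_neg h1, if_neg h2]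
        have := hdec i
        omega
  · refine ⟨ℓ + 1, fun i hi => ?_⟩
    have h1 : i ≠ ℓ := by omega
    rw [incr_apply, if_neg h1]
    have := hzero i (by omega)
    omega

/-- from the order invariant, letters are bounded by `ℓ + length` -/
lemma letter_bound {x : List ℕ} {ℓ : ℕ}
    (hord : ∀ c, ℓ < c → c ∈ x → ∃ u v, x = u ++ v ∧ c ∈ u ∧ (c - 1) ∈ v) :
    ∀ c ∈ x, c ≤ ℓ + x.length := by
  have hdown : ∀ c, ℓ < c → c ∈ x → (c - 1) ∈ x := by
    intro c hc hm
    obtain ⟨u, v, hx, -, hv⟩ := hord c hc hm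
    rw [hx]
    exact List.mem_append_right _ hv
  have hIcc : ∀ c, c ∈ x → ∀ b, ℓ < b → b ≤ c → b ∈ x := by
    intro c
    induction c using Nat.strong_induction_on with
    | _ c ih =>
      intro hc b hb1 hb2
      rcases eq_or_lt_of_le hb2 with rfl | hlt
      · exact hc
      · have hlc : ℓ < c := by omega
        have hc' := hdown c hlc hc
        exact ih (c - 1) (by omega) hc' b hb1 (by omega)
  intro c hc
  by_cases hcl : c ≤ ℓ
  · omega
  · have hsub : Finset.Icc (ℓ + 1) c ⊆ x.toFinset := by
      intro b hb
      rw [Finset.mem_Icc] at hb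
      exact List.mem_toFinset.2 (hIcc c hc b (by omega) hb.2)
    have h1 : (Finset.Icc (ℓ + 1) c).card ≤ x.toFinset.card := Finset.card_le_card hsub
    rw [Nat.card_Icc] at h1
    have h2 := List.toFinset_card_le x
    omega

/-- contradiction when fuel runs out on a nonempty word -/
lemma no_fuel {nB B ℓ len sum : ℕ} (hnB : nB ≤ tri B) (hlB : ℓ ≤ B)
    (hsum : sum ≤ len * (ℓ + len)) (hlen : 1 ≤ len)
    (h : 2 * (len + tri (B + len)) ≤ nB + sum) : False := by
  have h1 := tri_add_le B len
  have h2 := two_tri len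
  have hmul : len * (len - 1) + len = len * len := by
    cases len with
    | zero => simp
    | succ m => simp only [Nat.add_sub_cancel]; ring
  have hsum' : sum ≤ len * B + len * len := by
    calc sum ≤ len * (ℓ + len) := hsum
    _ ≤ len * (B + len) := Nat.mul_le_mul_left _ (by omega)
    _ = len * B + len * len := by ring
  rw [Nat.mul_comm B len] at h1
  set x1 := tri B with hx1
  set x2 := tri len with hx2
  set x3 := tri (B + len) with hx3
  set y1 := len * B with hy1
  set y2 := len * len with hy2
  set y3 := len * (len - 1) with hy3
  omega

/-- The main induction: any state satisfying the invariants empties within the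
stated bound. -/
lemma aux (N : ℕ) : ∀ (x : List ℕ) (ν : ℕ → ℕ) (ℓ : ℕ),
    (∀ i, ν (i + 1) ≤ ν i) →
    (∀ i, i < ℓ → 0 < ν i) →
    (∀ i, ℓ ≤ i → ν i = 0) →
    (∀ c, ℓ < c → c ∈ x → ∃ u v, x = u ++ v ∧ c ∈ u ∧ (c - 1) ∈ v) →
    nBsum ν ℓ ≤ tri (Bsum ν ℓ) →
    2 * (x.length + tri (Bsum ν ℓ + x.length)) ≤ N + (nBsum ν ℓ + x.sum) →
    ∃ k, (step^[k] (x, ν)).1 = [] ∧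
      k + (nBsum ν ℓ + x.sum) ≤ x.length + tri (Bsum ν ℓ + x.length) := by
  induction N with
  | zero =>
    intro x ν ℓ hdec hpos hzero hord hnB hfuel
    rcases x.eq_nil_or_concat with rfl | ⟨y, a, hxy⟩
    · refine ⟨0, rfl, ?_⟩
      simpa using hnB
    · exfalso
      rw [List.concat_eq_append] at hxy
      subst hxy
      have hlen : 1 ≤ (y ++ [a]).length := by simp
      have hsum : (y ++ [a]).sum ≤ (y ++ [a]).length * (ℓ + (y ++ [a]).length) := by
        have hb := letter_bound hord
        have := List.sum_le_card_nsmul (y ++ [a]) (ℓ + (y ++ [a]).length) hb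
        simpa [smul_eq_mul] using this
      exact no_fuel hnB (le_Bsum ν ℓ hpos) hsum hlen (by omega)
  | succ N ih =>
    intro x ν ℓ hdec hpos hzero hord hnB hfuel
    rcases x.eq_nil_or_concat with rfl | ⟨y, a, hxy⟩
    · refine ⟨0, rfl, ?_⟩
      simpa using hnB
    · rw [List.concat_eq_append] at hxy
      subst hxy
      have hsum_eq : (y ++ [a]).sum = y.sum + a := by simp
      have hlen_eq : (y ++ [a]).length = y.length + 1 := by simp
      rw [hsum_eq, hlen_eq] at hfuel ⊢
      by_cases hP : IsPartitionFn (incr ν a)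
      · -- insertion
        have haℓ : a ≤ ℓ := by
          by_contra h
          exact not_insert_beyond hzero (by omega) hP
        -- common facts for order invariant
        have hord_common : ∀ ℓ', ℓ ≤ ℓ' → (∀ c, ℓ' < c → a < c - 1) →
            (∀ c, ℓ' < c → c ∈ y → ∃ u v, y = u ++ v ∧ c ∈ u ∧ (c - 1) ∈ v) := by
          intro ℓ' hll hgap c hc hcy
          obtain ⟨u, v, hx, hcu, hcv⟩ := hord c (by omega) (List.mem_append_left _ hcy)
          obtain ⟨v', rfl, hy⟩ := split_concat hx.symm (List.ne_nil_of_mem hcv)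
          have hca : c - 1 ≠ a := by
            have := hgap c hc
            omega
          have hcv' : (c - 1) ∈ v' := by
            rcases List.mem_append.1 hcv with h | h
            · exact h
            · simp at h; omega
          exact ⟨u, v', hy, hcu, hcv'⟩
        rcases eq_or_lt_of_le haℓ with rfl | hlt
        · -- a = ℓ : the number of parts grows
          have hzl : ν a = 0 := hzero a le_rfl
          have hord' := hord_common (a + 1) (by omega) (fun c hc => by omega)
          have hpos' : ∀ i, i < a + 1 → 0 < incr ν a i := by
            intro i hi
            rcases eq_or_lt_of_le (Nat.lt_succ_iff.1 hi) with rfl | hia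
            · simp [incr]
            · have : i ≠ a := by omega
              simp only [incr, if_neg this]
              exact hpos i hia
          have hzero' : ∀ i, a + 1 ≤ i → incr ν a i = 0 := by
            intro i hi
            have : i ≠ a := by omega
            simp only [incr, if_neg this]
            exact hzero i (by omega)
          have hB := Bsum_incr_eq ν hzl
          have hnB' := nBsum_incr_eq ν hzl
          have hlB := le_Bsum ν a hpos
          obtain ⟨k, hk1, hk2⟩ := ih y (incr ν a) (a + 1) hP.1 hpos' hzero' hord'
            (by rw [hB, hnB']; have := tri_succ (Bsum ν a); omega)
            (by rw [hB, hnB']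
                have harg : Bsum ν a + 1 + y.length = Bsum ν a + (y.length + 1) := by
                  omega
                rw [harg]
                omega)
          refine ⟨k + 1, ?_, ?_⟩
          · rw [Function.iterate_succ_apply, step_pos hP]
            exact hk1
          · have harg : Bsum (incr ν a) (a + 1) + y.length = Bsum ν a + (y.length + 1) := by
              rw [hB]; omega
            rw [harg, hnB'] at hk2
            omega
        · -- a < ℓ
          have hord' := hord_common ℓ le_rfl (fun c hc => by omega)
          have hdec' := hP.1
          have hpos' : ∀ i, i < ℓ → 0 < incr ν a i := by
            intro i hi
            have := hpos i hi
            rw [incr_apply]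
            omega
          have hzero' : ∀ i, ℓ ≤ i → incr ν a i = 0 := by
            intro i hi
            have : i ≠ a := by omega
            simp only [incr, if_neg this]
            exact hzero i hi
          have hB := Bsum_incr_lt ν hlt
          have hnB' := nBsum_incr_lt ν hlt
          have hlB := le_Bsum ν ℓ hpos
          obtain ⟨k, hk1, hk2⟩ := ih y (incr ν a) ℓ hdec' hpos' hzero' hord'
            (by rw [hB, hnB']; have := tri_succ (Bsum ν ℓ); omega)
            (by rw [hB, hnB']
                have harg : Bsum ν ℓ + 1 + y.length = Bsum ν ℓ + (y.length + 1) := by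
                  omega
                rw [harg]
                omega)
          refine ⟨k + 1, ?_, ?_⟩
          · rw [Function.iterate_succ_apply, step_pos hP]
            exact hk1
          · have harg : Bsum (incr ν a) ℓ + y.length = Bsum ν ℓ + (y.length + 1) := by
              rw [hB]; omega
            rw [harg, hnB'] at hk2
            omega
      · -- corotation
        have ha_ne : a ≠ ℓ := by
          rintro rfl
          exact hP (insert_top hdec hpos hzero)
        have hord' : ∀ c, ℓ < c → c ∈ (a + 1) :: y →
            ∃ u v, (a + 1) :: y = u ++ v ∧ c ∈ u ∧ (c - 1) ∈ v := by
          intro c hc hcm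
          by_cases hca : c = a + 1
          · subst hca
            -- need a ∈ y ; note ℓ < a + 1 and a ≠ ℓ gives ℓ < a... unless a < ℓ
            have hla : ℓ < a := by omega
            obtain ⟨u, v, hx, hau, hav⟩ := hord a hla (by simp)
            obtain ⟨v', rfl, hy⟩ := split_concat hx.symm (List.ne_nil_of_mem hav)
            refine ⟨[a + 1], y, rfl, by simp, ?_⟩
            have : a ∈ y := by rw [hy]; exact List.mem_append_left _ hau
            simpa using this
          · have hcy : c ∈ y := by
              rcases List.mem_cons.1 hcm with h | h
              · exact absurd h hca
              · exact h
            obtain ⟨u, v, hx, hcu, hcv⟩ := hord c hc (List.mem_append_left _ hcy)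
            obtain ⟨v', rfl, hy⟩ := split_concat hx.symm (List.ne_nil_of_mem hcv)
            have hca' : c - 1 ≠ a := by omega
            have hcv' : (c - 1) ∈ v' := by
              rcases List.mem_append.1 hcv with h | h
              · exact h
              · simp at h; omega
            refine ⟨(a + 1) :: u, v', by rw [hy]; rfl, List.mem_cons_of_mem _ hcu, hcv'⟩
        have hsum' : ((a + 1) :: y).sum = y.sum + a + 1 := by simp; omega
        have hlen' : ((a + 1) :: y).length = y.length + 1 := by simp
        obtain ⟨k, hk1, hk2⟩ := ih ((a + 1) :: y) ν ℓ hdec hpos hzero hord' hnB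
          (by rw [hsum', hlen']; omega)
        refine ⟨k + 1, ?_, ?_⟩
        · rw [Function.iterate_succ_apply, step_neg hP]
          exact hk1
        · rw [hsum', hlen'] at hk2
          omega

end CatabolismAux

open CatabolismAux in
lemma initial_horder (n : ℕ) (w : List ℕ) (hw : IsStandardWord n w) :
    ∀ c, 0 < c → c ∈ cochargeLabeling w →
    ∃ u v, cochargeLabeling w = u ++ v ∧ c ∈ u ∧ (c - 1) ∈ v := by
  classical
  intro c hc hmem
  have hmemw : ∀ e, e ∈ w ↔ (1 ≤ e ∧ e ≤ n) := by
    intro e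
    rw [hw.mem_iff]
    simp only [List.mem_map, List.mem_range]
    constructor
    · rintro ⟨m, hm, rfl⟩; omega
    · rintro ⟨h1, h2⟩; exact ⟨e - 1, by omega, by omega⟩
  obtain ⟨e, hew, hlab⟩ := List.mem_map.1 hmem
  have hex : ∃ e, e ∈ w ∧ entryLabel w e = c := ⟨e, hew, hlab⟩
  obtain ⟨h0w, h0lab⟩ := Nat.find_spec hex
  have h1e : 1 ≤ Nat.find hex ∧ Nat.find hex ≤ n := (hmemw _).1 h0w
  have h2e : 2 ≤ Nat.find hex := by
    rcases Nat.lt_or_ge (Nat.find hex) 2 with h | h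
    · exfalso
      have h1 : Nat.find hex = 1 := by omega
      rw [h1] at h0lab
      have : entryLabel w 1 = 0 := rfl
      omega
    · exact h
  obtain ⟨i, hi⟩ : ∃ i, Nat.find hex = i + 2 := ⟨Nat.find hex - 2, by omega⟩
  rw [hi] at h0w h0lab
  have hlabeq : entryLabel w (i + 2)
      = entryLabel w (i + 1) + (if w.idxOf (i + 2) < w.idxOf (i + 1) then 1 else 0) := by
    rfl
  have hi1w : i + 1 ∈ w := by
    rw [hmemw]
    have := ((hmemw (i + 2)).1 h0w).2
    omega
  have hind : w.idxOf (i + 2) < w.idxOf (i + 1) := by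
    by_contra hnot
    rw [if_neg hnot] at hlabeq
    have hl1 : entryLabel w (i + 1) = c := by omega
    have := Nat.find_min hex (m := i + 1) (by omega) ⟨hi1w, hl1⟩
    exact this
  have hlab1 : entryLabel w (i + 1) = c - 1 := by
    rw [if_pos hind] at hlabeq
    omega
  set p := w.idxOf (i + 2) with hp_def
  set q := w.idxOf (i + 1) with hq_def
  have hp : p < w.length := List.idxOf_lt_length_iff.2 h0w
  have hq : q < w.length := List.idxOf_lt_length_iff.2 hi1w
  have hLlen : (cochargeLabeling w).length = w.length := List.length_map _
  refine ⟨(cochargeLabeling w).take (p + 1), (cochargeLabeling w).drop (p + 1),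
    (List.take_append_drop _ _).symm, ?_, ?_⟩
  · have hlt : p < ((cochargeLabeling w).take (p + 1)).length := by
      rw [List.length_take]
      omega
    have he : ((cochargeLabeling w).take (p + 1))[p]'hlt = c := by
      rw [List.getElem_take]
      show (cochargeLabeling w)[p]'(by omega) = c
      unfold cochargeLabeling
      rw [List.getElem_map]
      rw [List.getElem_idxOf hp]
      exact h0lab
    exact he ▸ List.getElem_mem hlt
  · obtain ⟨d, hd⟩ : ∃ d, q = p + 1 + d := ⟨q - (p + 1), by omega⟩
    have hlt : d < ((cochargeLabeling w).drop (p + 1)).length := by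
      rw [List.length_drop]
      omega
    have he : ((cochargeLabeling w).drop (p + 1))[d]'hlt = c - 1 := by
      rw [List.getElem_drop]
      show (cochargeLabeling w)[p + 1 + d]'(by omega) = c - 1
      unfold cochargeLabeling
      rw [List.getElem_map]
      have hw_eq : w[q]'hq = i + 1 := List.getElem_idxOf hq
      have e1 : w[p + 1 + d]? = w[q]? := by rw [← hd]
      rw [List.getElem?_eq_getElem hq, hw_eq] at e1
      have e2 : w[p + 1 + d]? = some (w[p + 1 + d]'(by omega)) := List.getElem?_eq_getElem _
      rw [e2] at e1
      have : w[p + 1 + d]'(by omega) = i + 1 := Option.some.inj e1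
      rw [this]
      exact hlab1
    exact he ▸ List.getElem_mem hlt

open CatabolismAux in
/-- The catabolism insertion algorithm terminates: starting from
`(cochargeLabeling w, ∅)` for a standard word `w` of length `n`, the word
component becomes empty after at most `n + n (n - 1) / 2` steps. -/
theorem catabolism_insertion_terminates (n : ℕ) (w : List ℕ)
    (hw : IsStandardWord n w) :
    ∃ k ≤ n + n * (n - 1) / 2,
      (step^[k] (cochargeLabeling w, fun _ => 0)).1 = [] := by
  have hlen : (cochargeLabeling w).length = n := by
    unfold cochargeLabeling
    rw [List.length_map, hw.length_eq, List.length_map, List.length_range]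
  have hB0 : Bsum (fun _ => 0) 0 = 0 := by simp [Bsum]
  have hnB0 : nBsum (fun _ => 0) 0 = 0 := by simp [nBsum]
  obtain ⟨k, hk1, hk2⟩ := aux (2 * (n + tri n)) (cochargeLabeling w) (fun _ => 0) 0
    (fun i => le_refl 0) (fun i hi => absurd hi (by omega)) (fun i _ => rfl)
    (initial_horder n w hw)
    (by rw [hB0, hnB0]; simp [tri])
    (by rw [hB0, hnB0, hlen]; simp)
  refine ⟨k, ?_, hk1⟩
  rw [hB0, hnB0, hlen] at hk2
  have h2 := two_tri n
  rw [zero_add, zero_add] at hk2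
  generalize hm : n * (n - 1) = m at h2 ⊢
  omega
end

section
/- If the catabolism insertion algorithm applied to a standard word of length n terminates with final partition F(w), then F(w) is a partition of n (the parts sum to n). -/
def CatInv (n : ℕ) (s : List ℕ × (ℕ → ℕ)) : Prop :=
  IsPartitionFn s.2 ∧ ∀ N, (∀ i, N ≤ i → s.2 i = 0) →
    s.1.length + ∑ i ∈ Finset.range N, s.2 i = n

lemma inv_step (n : ℕ) (s : List ℕ × (ℕ → ℕ)) (h : CatInv n s) : CatInv n (step s) := by
  obtain ⟨hp, hs⟩ := h
  rcases hl : s.1.getLast? with _ | a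
  · simpa [step, hl] using ⟨hp, hs⟩
  · have hlen : 1 ≤ s.1.length := by
      cases hc : s.1 <;> simp [hc] at hl ⊢
    by_cases hI : IsPartitionFn (incr s.2 a)
    · simp only [step, hl, if_pos hI]
      refine ⟨hI, ?_⟩
      intro N hN
      have haN : a < N := by
        by_contra hc
        have := hN a (le_of_not_gt hc)
        simp [incr] at this
      have hN' : ∀ i, N ≤ i → s.2 i = 0 := by
        intro i hi
        have hne : i ≠ a := by omega
        simpa [incr, hne] using hN i hi
      have hsum : ∑ i ∈ Finset.range N, incr s.2 a i
          = (∑ i ∈ Finset.range N, s.2 i) + 1 := by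
        have : ∀ i, incr s.2 a i = s.2 i + (if i = a then 1 else 0) := by
          intro i; simp only [incr]; split <;> simp_all
        simp only [this, Finset.sum_add_distrib, Finset.sum_ite_eq',
          Finset.mem_range.mpr haN, if_pos]
      have := hs N hN'
      simp only [List.length_dropLast, hsum]
      omega
    · simp only [step, hl, if_neg hI]
      refine ⟨hp, ?_⟩
      intro N hN
      have := hs N hN
      simp only [List.length_cons, List.length_dropLast]
      omega

/-- If the catabolism insertion algorithm applied to a standard word of length
`n` terminates with final partition `ν = F w`, then `ν` is a partition whose
parts sum to `n`. -/
theorem output_is_partition_of_n (n : ℕ) (w : List ℕ)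
    (hw : IsStandardWord n w) (ν : ℕ → ℕ) (hout : Outputs w ν) :
    IsPartitionFn ν ∧
      ∀ N, (∀ i, N ≤ i → ν i = 0) → ∑ i ∈ Finset.range N, ν i = n := by
  obtain ⟨k, hk⟩ := hout
  have hinv : ∀ m, CatInv n (step^[m] (cochargeLabeling w, fun _ => 0)) := by
    intro m
    induction m with
    | zero =>
      constructor
      · exact ⟨fun i => le_refl 0, 0, fun i _ => rfl⟩
      · intro N _
        have hlen : (cochargeLabeling w).length = n := by
          have := hw.length_eq
          simp [cochargeLabeling, IsStandardWord] at this ⊢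
          omega
        simpa using hlen
    | succ m ih =>
      rw [Function.iterate_succ_apply']
      exact inv_step n _ ih
  have := hinv k
  rw [hk] at this
  obtain ⟨h1, h2⟩ := this
  exact ⟨h1, fun N hN => by simpa using h2 N hN⟩
end

section
/- Catabolism insertion is invariant under catabolism transformations: if u and v are standard words with cocharge labelings that differ by swapping two adjacent entries z_i, z_{i+1} with |z_i - z_{i+1}| > 1, then F(u) = F(v). -/
lemma isPartitionFn_incr_iff (ν : ℕ → ℕ) (hν : IsPartitionFn ν) (a : ℕ) :
    IsPartitionFn (incr ν a) ↔ ∀ m, a = m + 1 → ν a < ν m := by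
  obtain ⟨hd, N, hN⟩ := hν
  constructor
  · rintro ⟨hd', -⟩ m rfl
    have := hd' m
    simp [incr] at this
    omega
  · intro h
    refine ⟨fun i => ?_, ⟨max N (a + 1), fun i hi => ?_⟩⟩
    · by_cases h1 : i + 1 = a
      · have h2 : i ≠ a := by omega
        have := h i h1.symm
        simp [incr, h1, h2]
        omega
      · by_cases h2 : i = a
        · subst h2
          have := hd i
          simp [incr, h1]
          omega
        · simpa [incr, h1, h2] using hd i
    · have h1 : i ≠ a := by omega
      simp only [incr, if_neg h1]
      exact hN i (le_of_max_le_left hi)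

lemma incr_comm (ν : ℕ → ℕ) {a b : ℕ} (h : a ≠ b) :
    incr (incr ν a) b = incr (incr ν b) a := by
  funext i
  simp only [incr]
  split_ifs <;> simp_all

lemma incr_indep (ν : ℕ → ℕ) (hν : IsPartitionFn ν) (a b : ℕ)
    (hb : IsPartitionFn (incr ν b)) (hab : a ≠ b) (hab1 : a ≠ b + 1) :
    (IsPartitionFn (incr (incr ν b) a) ↔ IsPartitionFn (incr ν a)) := by
  rw [isPartitionFn_incr_iff _ hb, isPartitionFn_incr_iff _ hν]
  constructor <;> intro h m hm <;> have := h m hm <;>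
    have hmb : m ≠ b := by omega
  · simpa [incr, hab, hmb] using this
  · simpa [incr, hab, hmb] using this

open Classical in
lemma step_concat (L : List ℕ) (a : ℕ) (ν : ℕ → ℕ) :
    step (L ++ [a], ν) =
      if IsPartitionFn (incr ν a) then (L, incr ν a) else ((a + 1) :: L, ν) := by
  simp [step, List.getLast?_concat, List.dropLast_concat]

lemma swapAdj_cons (p : ℕ) (w : List ℕ) (j : ℕ) :
    swapAdj (p :: w) (j + 1) = p :: swapAdj w j := rfl

lemma list_decomp (x : List ℕ) (j : ℕ) (h : j + 1 < x.length) :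
    x = x.take j ++ x.getD j 0 :: x.getD (j + 1) 0 :: x.drop (j + 2) := by
  induction x generalizing j with
  | nil => simp at h
  | cons p xs ih =>
    cases j with
    | zero =>
      cases xs with
      | nil => simp at h
      | cons q r => simp
    | succ j =>
      simp only [List.length_cons] at h
      have := ih j (by omega)
      simpa using this

lemma swapAdj_decomp (x : List ℕ) (j : ℕ) (h : j + 1 < x.length) :
    swapAdj x j = x.take j ++ x.getD (j + 1) 0 :: x.getD j 0 :: x.drop (j + 2) := by
  induction x generalizing j with
  | nil => simp at h
  | cons p xs ih =>
    cases j with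
    | zero =>
      cases xs with
      | nil => simp at h
      | cons q r => simp [swapAdj]
    | succ j =>
      simp only [List.length_cons] at h
      rw [swapAdj_cons]
      have := ih j (by omega)
      simpa using this

/-- The bisimulation relation. -/
def CRel (s t : List ℕ × (ℕ → ℕ)) : Prop :=
  s = t ∨ ∃ P S a b, s.2 = t.2 ∧ IsPartitionFn s.2 ∧ a ≠ b ∧ a ≠ b + 1 ∧ b ≠ a + 1 ∧
      s.1 = P ++ a :: b :: S ∧ t.1 = P ++ b :: a :: S

lemma CRel.symm {s t : List ℕ × (ℕ → ℕ)} (h : CRel s t) : CRel t s := by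
  rcases h with rfl | ⟨P, S, a, b, h1, h2, h3, h4, h5, h6, h7⟩
  · exact Or.inl rfl
  · exact Or.inr ⟨P, S, b, a, h1.symm, h1 ▸ h2, h3.symm, h5, h4, h7, h6⟩

lemma rel_reach (k : ℕ) :
    ∀ s t ν, CRel s t → step^[k] s = ([], ν) → ∃ m, step^[m] t = ([], ν) := by
  induction k using Nat.strong_induction_on with
  | _ k IH =>
  intro s t ν hrel hk
  rcases hrel with rfl | ⟨P, S, a, b, hν, hp, hab, hab1, hba1, hs, ht⟩
  · exact ⟨k, hk⟩
  obtain ⟨s1, sν⟩ := s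
  obtain ⟨t1, tν⟩ := t
  simp only at hs ht hν
  subst hν hs ht
  rcases S.eq_nil_or_concat with rfl | ⟨S', c, rfl⟩
  · -- the swapped pair is at the very end
    have e1 : P ++ a :: b :: ([] : List ℕ) = (P ++ [a]) ++ [b] := by simp
    have e2 : P ++ b :: a :: ([] : List ℕ) = (P ++ [b]) ++ [a] := by simp
    match k with
    | 0 => simp at hk
    | 1 =>
      exfalso
      rw [Function.iterate_one, e1, step_concat] at hk
      split_ifs at hk <;> simp [Prod.ext_iff] at hk
    | (k' + 2) =>
      have hit : ∀ x : List ℕ × (ℕ → ℕ), step^[k' + 2] x = step^[k'] (step (step x)) := by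
        intro x
        rw [Function.iterate_add_apply step k' 2]
        rfl
      rw [hit] at hk
      by_cases Pb : IsPartitionFn (incr sν b) <;> by_cases Pa : IsPartitionFn (incr sν a)
      · -- both insert: states coincide after two steps
        have es : step (step (P ++ a :: b :: [], sν)) = (P, incr (incr sν b) a) := by
          rw [e1, step_concat, if_pos Pb, step_concat,
            if_pos ((incr_indep sν hp a b Pb hab hab1).mpr Pa)]
        have et : step (step (P ++ b :: a :: [], sν)) = (P, incr (incr sν b) a) := by
          rw [e2, step_concat, if_pos Pa, step_concat,
            if_pos ((incr_indep sν hp b a Pa (Ne.symm hab) hba1).mpr Pb),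
            incr_comm sν (Ne.symm hab)]
        refine ⟨k' + 2, ?_⟩
        rw [hit, et, ← es]; exact hk
      · -- b inserts, a corotates
        have es : step (step (P ++ a :: b :: [], sν)) = ((a + 1) :: P, incr sν b) := by
          rw [e1, step_concat, if_pos Pb, step_concat,
            if_neg (fun hcon => Pa ((incr_indep sν hp a b Pb hab hab1).mp hcon))]
        have et : step (step (P ++ b :: a :: [], sν)) = ((a + 1) :: P, incr sν b) := by
          rw [e2, step_concat, if_neg Pa]
          have : (a + 1) :: (P ++ [b]) = ((a + 1) :: P) ++ [b] := by simp
          rw [this, step_concat, if_pos Pb]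
        refine ⟨k' + 2, ?_⟩
        rw [hit, et, ← es]; exact hk
      · -- a inserts, b corotates
        have es : step (step (P ++ a :: b :: [], sν)) = ((b + 1) :: P, incr sν a) := by
          rw [e1, step_concat, if_neg Pb]
          have : (b + 1) :: (P ++ [a]) = ((b + 1) :: P) ++ [a] := by simp
          rw [this, step_concat, if_pos Pa]
        have et : step (step (P ++ b :: a :: [], sν)) = ((b + 1) :: P, incr sν a) := by
          rw [e2, step_concat, if_pos Pa, step_concat,
            if_neg (fun hcon => Pb ((incr_indep sν hp b a Pa (Ne.symm hab) hba1).mp hcon))]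
        refine ⟨k' + 2, ?_⟩
        rw [hit, et, ← es]; exact hk
      · -- both corotate: still swap-related
        have es : step (step (P ++ a :: b :: [], sν)) = ((a + 1) :: (b + 1) :: P, sν) := by
          rw [e1, step_concat, if_neg Pb]
          have : (b + 1) :: (P ++ [a]) = ((b + 1) :: P) ++ [a] := by simp
          rw [this, step_concat, if_neg Pa]
        have et : step (step (P ++ b :: a :: [], sν)) = ((b + 1) :: (a + 1) :: P, sν) := by
          rw [e2, step_concat, if_neg Pa]
          have : (a + 1) :: (P ++ [b]) = ((a + 1) :: P) ++ [b] := by simp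
          rw [this, step_concat, if_neg Pb]
        rw [es] at hk
        have hrel' : CRel ((a + 1) :: (b + 1) :: P, sν) ((b + 1) :: (a + 1) :: P, sν) :=
          Or.inr ⟨[], P, a + 1, b + 1, rfl, hp, by omega, by omega, by omega, rfl, rfl⟩
        obtain ⟨m, hm⟩ := IH k' (by omega) _ _ ν hrel' hk
        refine ⟨m + 2, ?_⟩
        rw [Function.iterate_add_apply step m 2,
          show step^[2] (P ++ b :: a :: [], sν) = step (step (P ++ b :: a :: [], sν)) from rfl,
          et]
        exact hm
  · -- the swapped pair is not at the end
    simp only [List.concat_eq_append] at hk hp ⊢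
    have e1 : P ++ a :: b :: (S' ++ [c]) = (P ++ a :: b :: S') ++ [c] := by simp
    have e2 : P ++ b :: a :: (S' ++ [c]) = (P ++ b :: a :: S') ++ [c] := by simp
    match k with
    | 0 => simp at hk
    | (k' + 1) =>
      rw [Function.iterate_succ_apply] at hk
      by_cases Pc : IsPartitionFn (incr sν c)
      · rw [e1, step_concat, if_pos Pc] at hk
        have hrel' : CRel (P ++ a :: b :: S', incr sν c) (P ++ b :: a :: S', incr sν c) :=
          Or.inr ⟨P, S', a, b, rfl, Pc, hab, hab1, hba1, rfl, rfl⟩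
        obtain ⟨m, hm⟩ := IH k' (by omega) _ _ ν hrel' hk
        refine ⟨m + 1, ?_⟩
        rw [Function.iterate_add_apply step m 1, Function.iterate_one, e2, step_concat,
          if_pos Pc]
        exact hm
      · rw [e1, step_concat, if_neg Pc] at hk
        have ha : (c + 1) :: (P ++ a :: b :: S') = ((c + 1) :: P) ++ a :: b :: S' := by simp
        have hb' : (c + 1) :: (P ++ b :: a :: S') = ((c + 1) :: P) ++ b :: a :: S' := by simp
        rw [ha] at hk
        have hrel' : CRel (((c + 1) :: P) ++ a :: b :: S', sν)
            (((c + 1) :: P) ++ b :: a :: S', sν) :=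
          Or.inr ⟨(c + 1) :: P, S', a, b, rfl, hp, hab, hab1, hba1, rfl, rfl⟩
        obtain ⟨m, hm⟩ := IH k' (by omega) _ _ ν hrel' hk
        refine ⟨m + 1, ?_⟩
        rw [Function.iterate_add_apply step m 1, Function.iterate_one, e2, step_concat,
          if_neg Pc, hb']
        exact hm

/-- Catabolism insertion is invariant under catabolism transformations: if the
cocharge labelings of the standard words `u` and `v` differ by swapping two
adjacent entries (0-indexed positions `j`, `j + 1`) that differ by more than
`1`, then `F u = F v`. -/
theorem outputs_catabolism_transformation (n : ℕ) (u v : List ℕ)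
    (hu : IsStandardWord n u) (hv : IsStandardWord n v)
    (j : ℕ) (hj : j + 1 < n)
    (hswap : cochargeLabeling v = swapAdj (cochargeLabeling u) j)
    (hgap : 1 < (((cochargeLabeling u).getD j 0 : ℤ) -
      ((cochargeLabeling u).getD (j + 1) 0 : ℤ)).natAbs) :
    ∀ ν : ℕ → ℕ, Outputs u ν ↔ Outputs v ν := by
  intro ν
  have hp0 : IsPartitionFn (fun _ => 0) := ⟨fun _ => le_refl 0, 0, fun _ _ => rfl⟩
  have hlen : (cochargeLabeling u).length = n := by
    have h1 := hu.length_eq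
    simp only [List.length_map, List.length_range] at h1
    simp [cochargeLabeling, h1]
  set x := cochargeLabeling u with hx
  have hjlen : j + 1 < x.length := by omega
  have hdu : x = x.take j ++ x.getD j 0 :: x.getD (j + 1) 0 :: x.drop (j + 2) :=
    list_decomp x j hjlen
  have hdv : cochargeLabeling v =
      x.take j ++ x.getD (j + 1) 0 :: x.getD j 0 :: x.drop (j + 2) := by
    rw [hswap]; exact swapAdj_decomp x j hjlen
  have hg1 : x.getD j 0 ≠ x.getD (j + 1) 0 := by omega
  have hg2 : x.getD j 0 ≠ x.getD (j + 1) 0 + 1 := by omega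
  have hg3 : x.getD (j + 1) 0 ≠ x.getD j 0 + 1 := by omega
  have hrel : CRel (x, fun _ => 0) (cochargeLabeling v, fun _ => 0) :=
    Or.inr ⟨x.take j, x.drop (j + 2), x.getD j 0, x.getD (j + 1) 0, rfl, hp0,
      hg1, hg2, hg3, hdu, hdv⟩
  constructor
  · rintro ⟨k, hk⟩; exact rel_reach k _ _ ν hrel hk
  · rintro ⟨k, hk⟩; exact rel_reach k _ _ ν hrel.symm hk
end

section
/- Catabolism insertion is invariant under nonzero corotation: if u = wa is a standard word whose last entry a has nonzero cocharge label, and v = aw, then F(u) = F(v). -/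
lemma mem_standard {n x : ℕ} {u : List ℕ} (h : IsStandardWord n u) :
    x ∈ u ↔ 1 ≤ x ∧ x ≤ n := by
  rw [h.mem_iff]
  simp only [List.mem_map, List.mem_range]
  constructor
  · rintro ⟨j, hj, rfl⟩; omega
  · rintro ⟨h1, h2⟩; exact ⟨x - 1, by omega, by omega⟩

lemma nodup_standard {n : ℕ} {u : List ℕ} (h : IsStandardWord n u) : u.Nodup :=
  h.nodup_iff.mpr (List.Nodup.map (fun _ _ h => by omega) List.nodup_range)

lemma entryLabel_corot {n a : ℕ} {w : List ℕ}
    (hu : IsStandardWord n (w ++ [a])) (ha : 2 ≤ a) :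
    ∀ k, 1 ≤ k → k ≤ n →
      entryLabel (a :: w) k = entryLabel (w ++ [a]) k + (if k = a then 1 else 0) := by
  have hndp := nodup_standard hu
  have haw : a ∉ w := by
    rw [List.nodup_append] at hndp
    exact fun h => hndp.2.2 a h a (by simp) rfl
  have han : a ≤ n := ((mem_standard hu).mp (by simp)).2
  have hmemw : ∀ x, 1 ≤ x → x ≤ n → x ≠ a → x ∈ w := by
    intro x h1 h2 hxa
    have : x ∈ w ++ [a] := (mem_standard hu).mpr ⟨h1, h2⟩
    rcases List.mem_append.mp this with h | h
    · exact h
    · simp at h; omega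
  have idxu : ∀ x ∈ w, (w ++ [a]).idxOf x = w.idxOf x := fun x hx =>
    List.idxOf_append_of_mem hx
  have idxua : (w ++ [a]).idxOf a = w.length := by
    rw [List.idxOf_append_of_notMem haw]; simp
  have idxv : ∀ x, x ≠ a → (a :: w).idxOf x = w.idxOf x + 1 := fun x hx =>
    List.idxOf_cons_ne w (Ne.symm hx)
  have idxva : (a :: w).idxOf a = 0 := List.idxOf_cons_self
  intro k
  induction k with
  | zero => omega
  | succ i ih =>
    intro _ hkn
    match i, ih with
    | 0, _ =>
      simp only [entryLabel]
      have : (1 : ℕ) ≠ a := by omega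
      simp [this]
    | j + 1, ih =>
      have hih := ih (by omega) (by omega)
      by_cases h1 : j + 2 = a
      · -- the new entry is a; previous entry is a - 1 = j + 1
        have hj1a : j + 1 ≠ a := by omega
        have hj1w : j + 1 ∈ w := hmemw _ (by omega) (by omega) hj1a
        have hbu : ¬ (w ++ [a]).idxOf (j + 2) < (w ++ [a]).idxOf (j + 1) := by
          rw [h1, idxua, idxu _ hj1w]
          exact not_lt.mpr (le_of_lt (List.idxOf_lt_length_iff.mpr hj1w))
        have hbv : (a :: w).idxOf (j + 2) < (a :: w).idxOf (j + 1) := by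
          rw [h1, idxva, idxv _ hj1a]; omega
        simp only [entryLabel, if_pos hbv, if_neg hbu, if_pos h1, if_neg hj1a] at *
        omega
      · by_cases h2 : j + 1 = a
        · -- previous entry is a; new entry is a + 1
          have hj2w : j + 2 ∈ w := hmemw _ (by omega) (by omega) h1
          have hbu : (w ++ [a]).idxOf (j + 2) < (w ++ [a]).idxOf (j + 1) := by
            rw [h2, idxua, idxu _ hj2w]
            exact List.idxOf_lt_length_iff.mpr hj2w
          have hbv : ¬ (a :: w).idxOf (j + 2) < (a :: w).idxOf (j + 1) := by
            rw [h2, idxva, idxv _ h1]; omega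
          simp only [entryLabel, if_pos hbu, if_neg hbv, if_neg h1, if_pos h2] at *
          omega
        · -- neither entry is a
          have hj1w : j + 1 ∈ w := hmemw _ (by omega) (by omega) h2
          have hj2w : j + 2 ∈ w := hmemw _ (by omega) (by omega) h1
          have hb : ((w ++ [a]).idxOf (j + 2) < (w ++ [a]).idxOf (j + 1)) ↔
              ((a :: w).idxOf (j + 2) < (a :: w).idxOf (j + 1)) := by
            rw [idxu _ hj1w, idxu _ hj2w, idxv _ h1, idxv _ h2]; omega
          simp only [entryLabel, if_neg h1, if_neg h2] at *
          by_cases hc : (w ++ [a]).idxOf (j + 2) < (w ++ [a]).idxOf (j + 1)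
          · rw [if_pos hc, if_pos (hb.mp hc)]; omega
          · rw [if_neg hc, if_neg (fun h => hc (hb.mpr h))]; omega

lemma CL_corot {n a : ℕ} {w : List ℕ}
    (hu : IsStandardWord n (w ++ [a])) (ha : 2 ≤ a) :
    cochargeLabeling (a :: w) =
      (entryLabel (w ++ [a]) a + 1) :: w.map (entryLabel (w ++ [a])) := by
  have hndp := nodup_standard hu
  have haw : a ∉ w := by
    rw [List.nodup_append] at hndp
    exact fun h => hndp.2.2 a h a (by simp) rfl
  have han : a ≤ n := ((mem_standard hu).mp (by simp)).2
  have key := entryLabel_corot hu ha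
  unfold cochargeLabeling
  rw [List.map_cons]
  congr 1
  · rw [key a (by omega) han, if_pos rfl]
  · apply List.map_congr_left
    intro x hx
    have hxa : x ≠ a := fun h => haw (h ▸ hx)
    have hxmem : x ∈ w ++ [a] := List.mem_append.mpr (Or.inl hx)
    obtain ⟨h1, h2⟩ := (mem_standard hu).mp hxmem
    rw [key x h1 h2, if_neg hxa]
    omega

/-- Catabolism insertion is invariant under nonzero corotation: if
`u = w ++ [a]` is a standard word whose last entry `a` has nonzero cocharge
label, and `v = a :: w`, then `F u = F v`. -/
theorem outputs_nonzero_corotation (n : ℕ) (w : List ℕ) (a : ℕ)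
    (hu : IsStandardWord n (w ++ [a]))
    (hnz : (cochargeLabeling (w ++ [a])).getLastD 0 ≠ 0) :
    ∀ ν : ℕ → ℕ, Outputs (w ++ [a]) ν ↔ Outputs (a :: w) ν := by
  set c := entryLabel (w ++ [a]) a with hc
  have hCLu : cochargeLabeling (w ++ [a]) = w.map (entryLabel (w ++ [a])) ++ [c] := by
    unfold cochargeLabeling; rw [List.map_append]; rfl
  have hcnz : c ≠ 0 := by
    rw [hCLu] at hnz
    simpa using hnz
  have ha1 : 1 ≤ a := ((mem_standard hu).mp (by simp)).1
  have ha : 2 ≤ a := by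
    by_contra h
    have h1 : a = 1 := by omega
    subst h1
    exact hcnz (by rw [hc]; simp [entryLabel])
  have hCLv := CL_corot hu ha
  -- the first step of the algorithm on `w ++ [a]` produces the start state of `a :: w`
  have hstep : step (cochargeLabeling (w ++ [a]), fun _ => 0) =
      (cochargeLabeling (a :: w), fun _ => 0) := by
    rw [hCLu, hCLv]
    have hnp : ¬ IsPartitionFn (incr (fun _ => 0) c) := by
      rintro ⟨hdec, -⟩
      have h' := hdec (c - 1)
      have e1 : c - 1 + 1 = c := by omega
      have e2 : ¬ (c - 1 = c) := by omega
      simp only [incr, e1, if_pos rfl, if_neg e2] at h'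
      simp at h'
    simp only [step, List.getLast?_concat, if_neg hnp, List.dropLast_concat]
    rfl
  intro ν
  constructor
  · rintro ⟨k, hk⟩
    match k, hk with
    | 0, hk =>
      exfalso
      have : cochargeLabeling (w ++ [a]) = [] := congrArg Prod.fst hk
      rw [hCLu] at this
      simp at this
    | k + 1, hk =>
      refine ⟨k, ?_⟩
      rwa [Function.iterate_succ_apply, hstep] at hk
  · rintro ⟨k, hk⟩
    refine ⟨k + 1, ?_⟩
    rwa [Function.iterate_succ_apply, hstep]
end

section
/- Suppose u is a standard word of length n and v = u s_d with cocharge(v) = cocharge(u) and the cocharge labeling of u satisfies z_d ≠ z_{d+1} + 1. If j is a chain of the extended function of u, then s_d(j) is a chain of the extended function of v. -/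
/-- The extension `w̃ : ℤ_{≤ n} → ℤ_{≥ 0}` of the cocharge labeling `z` of `w`:
`w̃ i = z_{i + k n} + k` where `k` is the unique integer with `i + k n ∈ [1, n]`
(defined on all of `ℤ`; only values at `i ≤ n` are relevant). -/
def extFn (w : List ℕ) (n : ℕ) (i : ℤ) : ℤ :=
  ((cochargeLabeling w).getD ((i - 1).emod (n : ℤ)).toNat 0 : ℤ) - (i - 1).fdiv (n : ℤ)

/-- `j` (restricted to indices `0, …, k'`) is a chain of `g` of length `k' + 1`:
`j_{k'} < ⋯ < j_0` are integers `≤ n` with `g (j_i) = i` and pairwise distinct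
residues mod `n`. -/
def IsChainOf (g : ℤ → ℤ) (n : ℕ) (k' : ℕ) (j : ℕ → ℤ) : Prop :=
  (∀ i ≤ k', j i ≤ (n : ℤ)) ∧
  (∀ i, i + 1 ≤ k' → j (i + 1) < j i) ∧
  (∀ i ≤ k', g (j i) = (i : ℤ)) ∧
  (∀ i i', i ≤ k' → i' ≤ k' → i ≠ i' → j i % (n : ℤ) ≠ j i' % (n : ℤ))

/-- A `k`-bounded chain family of `g`: finitely many chains of `g`, each of
length at most `k`, whose residue sets mod `n` are pairwise disjoint. -/
structure BddChainFamily (g : ℤ → ℤ) (n k : ℕ) where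
  /-- the number of chains -/
  L : ℕ
  /-- `len t + 1` is the length of the `t`-th chain -/
  len : Fin L → ℕ
  /-- the `t`-th chain -/
  j : Fin L → ℕ → ℤ
  chain : ∀ t, IsChainOf g n (len t) (j t)
  bdd : ∀ t, len t + 1 ≤ k
  disj : ∀ t t', t ≠ t' → ∀ i i', i ≤ len t → i' ≤ len t' →
    j t i % (n : ℤ) ≠ j t' i' % (n : ℤ)

/-- The size of a chain family: the cardinality of its support, the union of
the underlying sets of its chains. -/
def BddChainFamily.size {g : ℤ → ℤ} {n k : ℕ} (A : BddChainFamily g n k) : ℕ :=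
  ((Finset.univ : Finset (Fin A.L)).biUnion
    (fun t => (Finset.range (A.len t + 1)).image (A.j t))).card

/-- `I_k(g)`: the maximum size of a `k`-bounded chain family of `g`. -/
noncomputable def Ik (g : ℤ → ℤ) (n k : ℕ) : ℕ :=
  sSup {m | ∃ A : BddChainFamily g n k, A.size = m}

/-- The affine simple reflection `s_d` (for `1 ≤ d ≤ n - 1`): it transposes
`d + k n` and `d + 1 + k n` for every integer `k`. -/
def affSwap (n d : ℕ) (m : ℤ) : ℤ :=
  if m % (n : ℤ) = (d : ℤ) % (n : ℤ) then m + 1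
  else if m % (n : ℤ) = ((d : ℤ) + 1) % (n : ℤ) then m - 1
  else m

namespace ChainSwapAux
open List

/-! ### `swapAdj` basics -/

lemma swapAdj_length (w : List ℕ) (e : ℕ) : (swapAdj w e).length = w.length := by
  simp [swapAdj]

lemma swapAdj_getElem (w : List ℕ) (e : ℕ) (he : e + 1 < w.length) (i : ℕ) (hi : i < w.length) :
    (swapAdj w e)[i]'(by rw [swapAdj_length]; exact hi) =
      if i = e then w[e+1] else if i = e+1 then w[e]'(by omega) else w[i] := by
  unfold swapAdj
  rw [List.getElem_set, List.getElem_set]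
  split_ifs <;> first
    | omega
    | (rw [List.getD_eq_getElem _ _ (by omega : e < w.length)])
    | (rw [List.getD_eq_getElem _ _ he])

lemma swapAdj_getD (w : List ℕ) (e : ℕ) (he : e + 1 < w.length) (i : ℕ) (hi : i < w.length) :
    (swapAdj w e).getD i 0 =
      if i = e then w.getD (e+1) 0 else if i = e+1 then w.getD e 0 else w.getD i 0 := by
  rw [List.getD_eq_getElem _ _ (by rw [swapAdj_length]; exact hi), swapAdj_getElem w e he i hi]
  split_ifs <;> (rw [List.getD_eq_getElem _ _ (by omega)])

lemma swapAdj_eq (w : List ℕ) (e : ℕ) (he : e + 1 < w.length) :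
    swapAdj w e = w.take e ++ w[e+1] :: w[e]'(by omega) :: w.drop (e+2) := by
  apply List.ext_getElem
  · simp [swapAdj_length]; omega
  · intro i h1 h2
    rw [swapAdj_getElem w e he i (by rwa [swapAdj_length] at h1)]
    rcases Nat.lt_trichotomy i e with h | h | h
    · rw [List.getElem_append_left (by simpa [List.length_take] using (by omega : i < min e w.length))]
      simp only [List.getElem_take]
      split_ifs <;> omega
    · subst h
      rw [List.getElem_append_right (by rw [List.length_take]; omega)]
      simp [List.length_take, Nat.min_eq_left (by omega : i ≤ w.length)]
    · have hte : (w.take e).length = e := by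
        rw [List.length_take]; exact Nat.min_eq_left (by omega)
      rw [List.getElem_append_right (by rw [hte]; omega)]
      split_ifs with h1' h2'
      · omega
      · subst h2'
        simp [hte]
      · have h3 : i - (w.take e).length = (i - e - 2) + 2 := by rw [hte]; omega
        simp only [h3, List.getElem_cons_succ, List.getElem_drop]
        congr 1
        omega

lemma swapAdj_perm (w : List ℕ) (e : ℕ) (he : e + 1 < w.length) :
    (swapAdj w e).Perm w := by
  rw [swapAdj_eq w e he]
  conv_rhs => rw [← List.take_append_drop e w,
    List.drop_eq_getElem_cons (by omega : e < w.length),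
    List.drop_eq_getElem_cons (by omega : e + 1 < w.length)]
  exact List.Perm.append_left _ (List.Perm.swap _ _ _)

lemma swapAdj_swapAdj (w : List ℕ) (e : ℕ) (he : e + 1 < w.length) :
    swapAdj (swapAdj w e) e = w := by
  have hl : (swapAdj w e).length = w.length := swapAdj_length w e
  apply List.ext_getElem (by rw [swapAdj_length, hl])
  intro i h1 h2
  rw [swapAdj_getElem (swapAdj w e) e (by omega) i (by omega)]
  rw [swapAdj_getElem w e he (e+1) (by omega), swapAdj_getElem w e he e (by omega),
    swapAdj_getElem w e he i h2]
  split_ifs <;> first | rfl | omega | (subst_vars; rfl)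

/-! ### standard words -/

lemma std_length {n : ℕ} {u : List ℕ} (hu : IsStandardWord n u) : u.length = n := by
  simpa using hu.length_eq

lemma std_nodup {n : ℕ} {u : List ℕ} (hu : IsStandardWord n u) : u.Nodup :=
  hu.nodup_iff.mpr ((List.nodup_range (n := n)).map (fun a b h => by omega))

lemma std_mem {n : ℕ} {u : List ℕ} (hu : IsStandardWord n u) {m : ℕ} :
    m ∈ u ↔ 1 ≤ m ∧ m ≤ n := by
  rw [hu.mem_iff]
  simp only [List.mem_map, List.mem_range]
  constructor
  · rintro ⟨a, ha, rfl⟩; omega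
  · rintro ⟨h1, h2⟩; exact ⟨m - 1, by omega, by omega⟩

lemma std_indexOf_getD {n : ℕ} {u : List ℕ} (hu : IsStandardWord n u) {r : ℕ} (hr : r < n) :
    u.idxOf (u.getD r 0) = r := by
  have hr' : r < u.length := by rw [std_length hu]; exact hr
  rw [List.getD_eq_getElem _ _ hr']
  exact List.Nodup.idxOf_getElem (std_nodup hu) r hr'

lemma std_indexOf_eq {n : ℕ} {u : List ℕ} (hu : IsStandardWord n u) {m r : ℕ} (hr : r < n)
    (h : u.idxOf m = r) : m = u.getD r 0 := by
  have hm : m ∈ u := by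
    by_contra hm
    rw [List.idxOf_eq_length_iff.mpr hm, std_length hu] at h; omega
  have hr' : r < u.length := by rw [std_length hu]; exact hr
  rw [List.getD_eq_getElem _ _ hr']
  rw [← (List.idxOf_inj (y := u[r]) hm).mp
    (by rw [h, List.Nodup.idxOf_getElem (std_nodup hu) r hr'])]

lemma std_swap {n : ℕ} {u : List ℕ} {e : ℕ} (hu : IsStandardWord n u) (he : e + 2 ≤ n) :
    IsStandardWord n (swapAdj u e) :=
  (swapAdj_perm u e (by rw [std_length hu]; omega)).trans hu

lemma getD_mem {n : ℕ} {u : List ℕ} (hu : IsStandardWord n u) {r : ℕ} (hr : r < n) :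
    1 ≤ u.getD r 0 ∧ u.getD r 0 ≤ n := by
  rw [← std_mem hu]
  rw [List.getD_eq_getElem _ _ (by rw [std_length hu]; exact hr)]
  exact List.getElem_mem _

/-! ### `indexOf` after a swap -/

lemma indexOf_swapAdj {n : ℕ} {u : List ℕ} {e : ℕ} (hu : IsStandardWord n u) (he : e + 2 ≤ n)
    (m : ℕ) :
    (swapAdj u e).idxOf m =
      if m = u.getD e 0 then e+1 else if m = u.getD (e+1) 0 then e else u.idxOf m := by
  have hv := std_swap hu he
  have h1 : (swapAdj u e).getD (e+1) 0 = u.getD e 0 := by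
    rw [swapAdj_getD u e (by rw [std_length hu]; omega) (e+1) (by rw [std_length hu]; omega)]
    simp
  have h2 : (swapAdj u e).getD e 0 = u.getD (e+1) 0 := by
    rw [swapAdj_getD u e (by rw [std_length hu]; omega) e (by rw [std_length hu]; omega)]
    simp
  split_ifs with hma hmb
  · subst hma; rw [← h1]; exact std_indexOf_getD hv (by omega)
  · subst hmb; rw [← h2]; exact std_indexOf_getD hv (by omega)
  · by_cases hm : m ∈ u
    · set r := u.idxOf m with hrdef
      have hrn : r < n := by rw [← std_length hu]; rwa [List.idxOf_lt_length_iff]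
      have hmr : m = u.getD r 0 := std_indexOf_eq hu hrn rfl
      have hre : r ≠ e := fun h => hma (by rw [hmr, h])
      have hre1 : r ≠ e + 1 := fun h => hmb (by rw [hmr, h])
      have : (swapAdj u e).getD r 0 = m := by
        rw [swapAdj_getD u e (by rw [std_length hu]; omega) r (by rw [std_length hu]; omega)]
        simp [hre, hre1, hmr]
      rw [← this]
      exact std_indexOf_getD hv hrn
    · have hm' : m ∉ swapAdj u e := by rwa [std_mem hv, ← std_mem hu]
      rw [List.idxOf_eq_length_iff.mpr hm, List.idxOf_eq_length_iff.mpr hm',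
        std_length hu, std_length hv]

lemma indicator_iff {n : ℕ} {u : List ℕ} {e : ℕ} (hu : IsStandardWord n u) (he : e + 2 ≤ n)
    {p q : ℕ} (hpq : p ≠ q)
    (h1 : ¬(q = u.getD e 0 ∧ p = u.getD (e+1) 0))
    (h2 : ¬(q = u.getD (e+1) 0 ∧ p = u.getD e 0)) :
    ((swapAdj u e).idxOf q < (swapAdj u e).idxOf p ↔ u.idxOf q < u.idxOf p) := by
  have ha : u.idxOf (u.getD e 0) = e := std_indexOf_getD hu (by omega)
  have hb : u.idxOf (u.getD (e+1) 0) = e + 1 := std_indexOf_getD hu (by omega)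
  have hfp : u.idxOf p = e → p = u.getD e 0 := fun h => std_indexOf_eq hu (by omega) h
  have hfq : u.idxOf q = e → q = u.getD e 0 := fun h => std_indexOf_eq hu (by omega) h
  have hfp1 : u.idxOf p = e + 1 → p = u.getD (e+1) 0 := fun h => std_indexOf_eq hu (by omega) h
  have hfq1 : u.idxOf q = e + 1 → q = u.getD (e+1) 0 := fun h => std_indexOf_eq hu (by omega) h
  rw [indexOf_swapAdj hu he, indexOf_swapAdj hu he]
  split_ifs with hqa hqb hpa hpb hpa' hpb' <;>
    first
      | omega
      | (exfalso; exact h1 ⟨hqa, hpb⟩)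
      | (exfalso; exact h2 ⟨hqb, hpa'⟩)
      | (subst_vars; omega)

/-! ### cocharge labels after a swap -/

section
variable {n : ℕ} {u : List ℕ} {e : ℕ}

lemma entryLabel_swap (hu : IsStandardWord n u) (he : e + 2 ≤ n)
    (hne : u.getD (e+1) 0 ≠ u.getD e 0 + 1) (hne' : u.getD e 0 ≠ u.getD (e+1) 0 + 1) :
    ∀ m, entryLabel (swapAdj u e) m = entryLabel u m := by
  intro m
  induction m with
  | zero => rfl
  | succ k ih =>
    match k, ih with
    | 0, _ => rfl
    | k' + 1, ih =>
      simp only [entryLabel]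
      rw [ih]
      congr 1
      exact if_congr (indicator_iff hu he (by omega) (fun ⟨h, h'⟩ => hne' (by omega))
        (fun ⟨h, h'⟩ => hne (by omega))) rfl rfl

lemma entryLabel_swap_asc (hu : IsStandardWord n u) (he : e + 2 ≤ n)
    (hb : u.getD (e+1) 0 = u.getD e 0 + 1) :
    ∀ m, entryLabel (swapAdj u e) m
      = entryLabel u m + (if u.getD (e+1) 0 ≤ m then 1 else 0) := by
  have ha1 : 1 ≤ u.getD e 0 := (getD_mem hu (by omega : e < n)).1
  intro m
  induction m with
  | zero =>
    rw [if_neg (by omega : ¬ u.getD (e+1) 0 ≤ 0)]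
    rfl
  | succ k ih =>
    match k, ih with
    | 0, _ =>
      rw [if_neg (by omega : ¬ u.getD (e+1) 0 ≤ 1)]
      rfl
    | k' + 1, ih =>
      simp only [entryLabel]
      rw [ih]
      by_cases hq : k' + 2 = u.getD (e+1) 0
      · have hp : k' + 1 = u.getD e 0 := by omega
        have hIq : (swapAdj u e).idxOf (k' + 2) = e := by
          rw [indexOf_swapAdj hu he, if_neg (by omega), if_pos hq]
        have hIp : (swapAdj u e).idxOf (k' + 1) = e + 1 := by
          rw [indexOf_swapAdj hu he, if_pos hp]
        have hIq' : u.idxOf (k' + 2) = e + 1 := by rw [hq]; exact std_indexOf_getD hu (by omega)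
        have hIp' : u.idxOf (k' + 1) = e := by rw [hp]; exact std_indexOf_getD hu (by omega)
        rw [hIq, hIp, hIq', hIp', if_pos (by omega : e < e + 1),
          if_neg (by omega : ¬ (e + 1 < e)),
          if_neg (by omega : ¬ (u.getD (e+1) 0 ≤ k' + 1)),
          if_pos (by omega : u.getD (e+1) 0 ≤ k' + 2)]
      · have hnp : ¬(k' + 2 = u.getD e 0 ∧ k' + 1 = u.getD (e+1) 0) := by
          rintro ⟨h, h'⟩; omega
        have hnp' : ¬(k' + 2 = u.getD (e+1) 0 ∧ k' + 1 = u.getD e 0) := fun ⟨h, _⟩ => hq h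
        rw [if_congr (indicator_iff hu he (by omega) hnp hnp') rfl rfl]
        have : (if u.getD (e+1) 0 ≤ k' + 1 then 1 else 0)
            = (if u.getD (e+1) 0 ≤ k' + 1 + 1 then 1 else 0) := by
          split_ifs <;> omega
        omega

lemma entryLabel_swap_desc (hu : IsStandardWord n u) (he : e + 2 ≤ n)
    (ha : u.getD e 0 = u.getD (e+1) 0 + 1) :
    ∀ m, entryLabel u m
      = entryLabel (swapAdj u e) m + (if u.getD e 0 ≤ m then 1 else 0) := by
  have hv : IsStandardWord n (swapAdj u e) := std_swap hu he
  have hul : e + 1 < u.length := by rw [std_length hu]; omega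
  have h1 : (swapAdj u e).getD e 0 = u.getD (e+1) 0 := by
    rw [swapAdj_getD u e hul e (by omega)]; simp
  have h2 : (swapAdj u e).getD (e+1) 0 = u.getD e 0 := by
    rw [swapAdj_getD u e hul (e+1) (by omega)]; simp
  intro m
  have := entryLabel_swap_asc hv he (by rw [h1, h2, ha]) m
  rw [swapAdj_swapAdj u e hul] at this
  rw [this, h2]

end

/-! ### cocharge comparison -/

lemma sum_map_add (l : List ℕ) (f g : ℕ → ℕ) :
    (l.map fun x => f x + g x).sum = (l.map f).sum + (l.map g).sum := by
  induction l with
  | nil => simp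
  | cons h t ih => simp [ih]; ring

lemma cocharge_eq {n : ℕ} {w : List ℕ} (hw : IsStandardWord n w) :
    cocharge w = ((List.range n).map (fun m => entryLabel w (m + 1))).sum := by
  unfold cocharge cochargeLabeling
  rw [(hw.map (entryLabel w)).sum_eq, List.map_map]
  rfl

section
variable {n : ℕ} {u : List ℕ} {e : ℕ}

lemma not_asc (hu : IsStandardWord n u) (he : e + 2 ≤ n)
    (hcc : cocharge (swapAdj u e) = cocharge u) :
    u.getD (e+1) 0 ≠ u.getD e 0 + 1 := by
  intro hb
  have hv := std_swap hu he
  have hsum : cocharge (swapAdj u e)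
      = cocharge u
        + ((List.range n).map (fun m => if u.getD (e+1) 0 ≤ m + 1 then 1 else 0)).sum := by
    rw [cocharge_eq hv, cocharge_eq hu, ← sum_map_add]
    congr 1
    apply List.map_congr_left
    intro m _
    exact entryLabel_swap_asc hu he hb (m + 1)
  rw [hsum] at hcc
  have hS : ((List.range n).map (fun m => if u.getD (e+1) 0 ≤ m + 1 then 1 else 0)).sum = 0 := by
    omega
  have hbn : u.getD (e+1) 0 ≤ n := (getD_mem hu (by omega : e + 1 < n)).2
  have hmem : (1 : ℕ) ∈ (List.range n).map (fun m => if u.getD (e+1) 0 ≤ m + 1 then 1 else 0) := by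
    rw [List.mem_map]
    exact ⟨n - 1, List.mem_range.mpr (by omega), by rw [if_pos (by omega)]⟩
  have := List.sum_eq_zero_iff.mp hS 1 hmem
  omega

lemma not_desc (hu : IsStandardWord n u) (he : e + 2 ≤ n)
    (hcc : cocharge (swapAdj u e) = cocharge u) :
    u.getD e 0 ≠ u.getD (e+1) 0 + 1 := by
  intro ha
  have hv := std_swap hu he
  have hsum : cocharge u
      = cocharge (swapAdj u e)
        + ((List.range n).map (fun m => if u.getD e 0 ≤ m + 1 then 1 else 0)).sum := by
    rw [cocharge_eq hv, cocharge_eq hu, ← sum_map_add]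
    congr 1
    apply List.map_congr_left
    intro m _
    exact entryLabel_swap_desc hu he ha (m + 1)
  rw [hcc] at hsum
  have hS : ((List.range n).map (fun m => if u.getD e 0 ≤ m + 1 then 1 else 0)).sum = 0 := by
    omega
  have hbn : u.getD e 0 ≤ n := (getD_mem hu (by omega : e < n)).2
  have hmem : (1 : ℕ) ∈ (List.range n).map (fun m => if u.getD e 0 ≤ m + 1 then 1 else 0) := by
    rw [List.mem_map]
    exact ⟨n - 1, List.mem_range.mpr (by omega), by rw [if_pos (by omega)]⟩
  have := List.sum_eq_zero_iff.mp hS 1 hmem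
  omega

end

/-! ### integer lemmas -/

lemma res_div (n : ℕ) (hn : 0 < n) (q : ℤ) (c : ℕ) (hc : c < n) :
    ((n:ℤ) * q + c) / (n:ℤ) = q ∧ ((n:ℤ) * q + c) % (n:ℤ) = c := by
  have h0 : (0:ℤ) ≤ c := by positivity
  have h1 : (c:ℤ) < n := by exact_mod_cast hc
  constructor
  · rw [add_comm, Int.add_mul_ediv_left _ _ (by exact_mod_cast hn.ne' : (n:ℤ) ≠ 0),
      Int.ediv_eq_zero_of_lt h0 h1, zero_add]
  · rw [add_comm, Int.add_mul_emod_self_left, Int.emod_eq_of_lt h0 h1]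

lemma extFn_res (w : List ℕ) (n : ℕ) (hn : 0 < n) (x : ℤ) (c : ℕ) (hc : c < n)
    (hx : (x - 1) % (n:ℤ) = (c:ℤ) % (n:ℤ)) :
    extFn w n x = ((cochargeLabeling w).getD c 0 : ℤ) - (x - 1) / (n:ℤ) := by
  have hcn : (c:ℤ) % (n:ℤ) = c :=
    Int.emod_eq_of_lt (by positivity) (by exact_mod_cast hc)
  have h1 : (x - 1).emod (n:ℤ) = c := by
    show (x - 1) % (n:ℤ) = c
    rw [hx, hcn]
  have h2 : (x - 1).fdiv (n:ℤ) = (x - 1) / (n:ℤ) :=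
    Int.fdiv_eq_ediv_of_nonneg (x - 1) (by positivity)
  unfold extFn
  rw [h1, h2, Int.toNat_natCast]

lemma decomp (n : ℕ) (hn : 0 < n) (x : ℤ) (c : ℕ) (hc : c < n)
    (hx : x % (n:ℤ) = (c:ℤ) % (n:ℤ)) : x = (n:ℤ) * (x / (n:ℤ)) + c := by
  have hcn : (c:ℤ) % (n:ℤ) = c :=
    Int.emod_eq_of_lt (by positivity) (by exact_mod_cast hc)
  have := Int.mul_ediv_add_emod x (n:ℤ)
  rw [hx, hcn] at this
  linarith

lemma modeq_shift {m x y c : ℤ} (h : x % m = y % m) : (x + c) % m = (y + c) % m :=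
  Int.ModEq.add_right c h

lemma mod_self_lt (n c : ℕ) (hc : c < n) : (c:ℤ) % (n:ℤ) = c :=
  Int.emod_eq_of_lt (by positivity) (by exact_mod_cast hc)

lemma not_mod_adjacent (n : ℕ) (hn : 2 ≤ n) (x y : ℤ) (h : x % (n:ℤ) = y % (n:ℤ))
    (hxy : y = x + 1) : False := by
  have : (n:ℤ) ∣ y - x := Int.ModEq.dvd h
  rw [hxy] at this
  simp at this
  have := Int.le_of_dvd one_pos this
  omega

lemma affSwap_spec (n d : ℕ) (x : ℤ) :
    (x % (n:ℤ) = (d:ℤ) % n ∧ affSwap n d x = x + 1)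
  ∨ (¬ x % (n:ℤ) = (d:ℤ) % n ∧ x % (n:ℤ) = ((d:ℤ)+1) % n ∧ affSwap n d x = x - 1)
  ∨ (¬ x % (n:ℤ) = (d:ℤ) % n ∧ ¬ x % (n:ℤ) = ((d:ℤ)+1) % n ∧ affSwap n d x = x) := by
  unfold affSwap
  split_ifs with h1 h2 <;> tauto

lemma affSwap_le (n d : ℕ) (hn : 2 ≤ n) (hd1 : 1 ≤ d) (hd2 : d + 1 ≤ n) (x : ℤ)
    (hx : x ≤ (n:ℤ)) : affSwap n d x ≤ (n:ℤ) := by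
  rcases affSwap_spec n d x with ⟨h1, hv⟩ | ⟨h1, h2, hv⟩ | ⟨h1, h2, hv⟩ <;> rw [hv]
  · rcases eq_or_lt_of_le hx with h | h
    · exfalso
      subst h
      rw [Int.emod_self, mod_self_lt n d (by omega)] at h1
      omega
    · omega
  · omega
  · omega

lemma sub_one_mod {n : ℕ} {x : ℤ} {d : ℕ} (h : x % (n:ℤ) = ((d:ℤ)+1) % n) :
    (x - 1) % (n:ℤ) = (d:ℤ) % n := by
  have := modeq_shift (m := (n:ℤ)) (c := -1) h
  simpa [sub_eq_add_neg] using this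

lemma affSwap_mod_inj (n d : ℕ) (hn : 2 ≤ n) (x y : ℤ)
    (h : affSwap n d x % (n:ℤ) = affSwap n d y % (n:ℤ)) : x % (n:ℤ) = y % (n:ℤ) := by
  rcases affSwap_spec n d x with ⟨hx1, hvx⟩ | ⟨hx1, hx2, hvx⟩ | ⟨hx1, hx2, hvx⟩ <;>
    rcases affSwap_spec n d y with ⟨hy1, hvy⟩ | ⟨hy1, hy2, hvy⟩ | ⟨hy1, hy2, hvy⟩ <;>
    rw [hvx, hvy] at h
  · rw [hx1, hy1]
  · exfalso
    rw [modeq_shift hx1, sub_one_mod hy2] at h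
    exact not_mod_adjacent n hn _ _ h.symm rfl
  · exact absurd (by rw [← h, modeq_shift hx1]) hy2
  · exfalso
    rw [sub_one_mod hx2, modeq_shift hy1] at h
    exact not_mod_adjacent n hn _ _ h rfl
  · rw [hx2, hy2]
  · exact absurd (by rw [← h, sub_one_mod hx2]) hy1
  · exact absurd (by rw [h, modeq_shift hy1]) hx2
  · exact absurd (by rw [h, sub_one_mod hy2]) hx1
  · exact h

lemma affSwap_lt (n d : ℕ) (hn : 2 ≤ n) (x y : ℤ) (hxy : x < y)
    (hbad : ¬ (y = x + 1 ∧ x % (n:ℤ) = (d:ℤ) % n)) : affSwap n d x < affSwap n d y := by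
  rcases affSwap_spec n d x with ⟨hx1, hvx⟩ | ⟨hx1, hx2, hvx⟩ | ⟨hx1, hx2, hvx⟩ <;>
    rcases affSwap_spec n d y with ⟨hy1, hvy⟩ | ⟨hy1, hy2, hvy⟩ | ⟨hy1, hy2, hvy⟩ <;>
    rw [hvx, hvy]
  · omega
  · have hne : y ≠ x + 1 := fun hh => hbad ⟨hh, hx1⟩
    have h' : (x + 1) % (n:ℤ) = y % (n:ℤ) := by rw [modeq_shift hx1, hy2]
    have hdvd : (n:ℤ) ∣ y - (x + 1) := Int.ModEq.dvd h'
    have := Int.le_of_dvd (by omega) hdvd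
    omega
  · have hne : y ≠ x + 1 := fun hh => hy2 (by rw [hh, modeq_shift hx1])
    omega
  · omega
  · omega
  · omega
  · omega
  · have hne : y ≠ x + 1 := fun hh => hx1 (by rw [show x = y - 1 by omega, sub_one_mod hy2])
    omega
  · omega

/-! ### the labeling after a swap, and `extFn` -/

lemma cochargeLabeling_getD (w : List ℕ) (r : ℕ) (hr : r < w.length) :
    (cochargeLabeling w).getD r 0 = entryLabel w (w.getD r 0) := by
  unfold cochargeLabeling
  rw [List.getD_eq_getElem _ _ (by simpa using hr), List.getD_eq_getElem _ _ hr,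
    List.getElem_map]

end ChainSwapAux

/-- Suppose `u` is a standard word of length `n`, `1 ≤ d ≤ n - 1`, and
`v = u s_d` (swapping the 1-indexed positions `d` and `d + 1`) has the same
cocharge as `u`, and the cocharge labeling `z` of `u` satisfies
`z_d ≠ z_{d+1} + 1`.  If `j` is a chain of `ũ`, then `s_d(j)` is a chain of
`ṽ`. -/
theorem chain_swap (n : ℕ) (u : List ℕ) (hu : IsStandardWord n u)
    (d : ℕ) (hd1 : 1 ≤ d) (hd2 : d ≤ n - 1)
    (hcc : cocharge (swapAdj u (d - 1)) = cocharge u)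
    (hlab : (cochargeLabeling u).getD (d - 1) 0 ≠
      (cochargeLabeling u).getD d 0 + 1)
    (k' : ℕ) (j : ℕ → ℤ) (hj : IsChainOf (extFn u n) n k' j) :
    IsChainOf (extFn (swapAdj u (d - 1)) n) n k' (fun i => affSwap n d (j i)) := by
  classical
  open ChainSwapAux in
  -- basic numerology
  have hn2 : 2 ≤ n := by omega
  have hn0 : 0 < n := by omega
  set e := d - 1 with hedef
  have hd : d = e + 1 := by omega
  have he : e + 2 ≤ n := by omega
  set v := swapAdj u (d - 1) with hvdef
  have hvv : v = swapAdj u e := by rw [hvdef, hedef]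
  have hv : IsStandardWord n v := by rw [hvv]; exact std_swap hu he
  have hul : e + 1 < u.length := by rw [std_length hu]; omega
  -- the two swapped entries are not adjacent values, so all labels are preserved
  have hE : ∀ m, entryLabel v m = entryLabel u m := by
    rw [hvv]
    exact entryLabel_swap hu he (not_asc hu he (by rw [← hvv]; exact hcc))
      (not_desc hu he (by rw [← hvv]; exact hcc))
  -- labeling of v in terms of labeling of u
  have hzv : ∀ r, r < n →
      (cochargeLabeling v).getD r 0
        = (cochargeLabeling u).getD (if r = e then e + 1 else if r = e + 1 then e else r) 0 := by
    intro r hr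
    rw [cochargeLabeling_getD v r (by rw [hvv, swapAdj_length, std_length hu]; omega),
      cochargeLabeling_getD u (if r = e then e + 1 else if r = e + 1 then e else r)
        (by rw [std_length hu]; split_ifs <;> omega)]
    rw [hvv, swapAdj_getD u e hul r (by rw [std_length hu]; exact hr)]
    rw [hE]
    split_ifs <;> rfl
  -- extFn is intertwined by the affine swap
  have hext : ∀ x : ℤ, extFn v n (affSwap n d x) = extFn u n x := by
    intro x
    have hcast : ((d:ℤ)) = ((e:ℤ)) + 1 := by push_cast [hd]; ring
    rcases affSwap_spec n d x with ⟨hx1, hvx⟩ | ⟨hx1, hx2, hvx⟩ | ⟨hx1, hx2, hvx⟩ <;> rw [hvx]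
    · -- x ≡ d : affSwap x = x + 1
      have hx1' : x % (n:ℤ) = ((e:ℤ)+1) % n := by rw [hx1, hcast]
      have hr1 : (x - 1) % (n:ℤ) = ((e:ℕ):ℤ) % n := sub_one_mod hx1'
      have hr2 : (x + 1 - 1) % (n:ℤ) = (((e+1:ℕ)):ℤ) % n := by
        have hxx : x + 1 - 1 = x := by ring
        rw [hxx, hx1']
        congr 1 <;> try push_cast <;> try omega
      rw [extFn_res v n hn0 (x+1) (e+1) (by omega) hr2,
        extFn_res u n hn0 x e (by omega) hr1]
      have hq : x - 1 = (n:ℤ) * ((x - 1) / n) + (e:ℕ) := decomp n hn0 (x-1) e (by omega) hr1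
      have hq2 : (x + 1 - 1) / (n:ℤ) = (x - 1) / (n:ℤ) := by
        have hx' : x + 1 - 1 = (n:ℤ) * ((x - 1) / n) + ((e+1:ℕ):ℤ) := by push_cast; linarith
        rw [hx', (res_div n hn0 _ (e+1) (by omega)).1]
      rw [hq2, hzv (e+1) (by omega), if_neg (by omega), if_pos rfl]
    · -- x ≡ d + 1 : affSwap x = x - 1
      have hs : x % (n:ℤ) = (((e+1:ℕ):ℤ)+1) % n := by
        rw [hx2]; congr 1 <;> try push_cast <;> try omega
      have hr1 : (x - 1) % (n:ℤ) = ((e+1:ℕ):ℤ) % n := sub_one_mod hs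
      have hs2 : (x - 1) % (n:ℤ) = (((e:ℕ):ℤ)+1) % n := by
        rw [hr1]; congr 1 <;> try push_cast <;> try omega
      have hr2 : (x - 1 - 1) % (n:ℤ) = ((e:ℕ):ℤ) % n := sub_one_mod hs2
      rw [extFn_res v n hn0 (x-1) e (by omega) hr2,
        extFn_res u n hn0 x (e+1) (by omega) hr1]
      have hq : x - 1 = (n:ℤ) * ((x - 1) / n) + ((e+1:ℕ):ℤ) := decomp n hn0 (x-1) (e+1) (by omega) hr1
      have hq2 : (x - 1 - 1) / (n:ℤ) = (x - 1) / (n:ℤ) := by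
        have hx' : x - 1 - 1 = (n:ℤ) * ((x - 1) / n) + ((e:ℕ):ℤ) := by push_cast at hq ⊢; linarith
        rw [hx', (res_div n hn0 _ e (by omega)).1]
      rw [hq2, hzv e (by omega), if_pos rfl]
    · -- x in neither class : affSwap x = x
      have h0 : (0:ℤ) ≤ (x - 1) % n := Int.emod_nonneg _ (by exact_mod_cast hn0.ne')
      have hlt : (x - 1) % n < (n:ℤ) := Int.emod_lt_of_pos _ (by exact_mod_cast hn0)
      set c : ℕ := ((x - 1) % (n:ℤ)).toNat with hcdef
      have hcc' : ((c:ℤ)) = (x - 1) % n := Int.toNat_of_nonneg h0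
      have hcn : c < n := by omega
      have hrc : (x - 1) % (n:ℤ) = ((c:ℕ):ℤ) % n := by
        rw [mod_self_lt n c hcn]; exact hcc'.symm
      have hce : c ≠ e := by
        intro hceq
        apply hx1
        have : (x - 1) % (n:ℤ) = ((e:ℤ)) % n := by
          rw [hrc, hceq]
        have h2 := modeq_shift (m := (n:ℤ)) (c := 1) this
        have h3 : x - 1 + 1 = x := by ring
        rw [h3] at h2
        rw [h2, hcast]
      have hce1 : c ≠ e + 1 := by
        intro hceq
        apply hx2
        have : (x - 1) % (n:ℤ) = ((e:ℤ) + 1) % n := by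
          rw [hrc, hceq]; congr 1 <;> try push_cast <;> try omega
        have h2 := modeq_shift (m := (n:ℤ)) (c := 1) this
        have h3 : x - 1 + 1 = x := by ring
        rw [h3] at h2
        rw [h2, hcast]
      rw [extFn_res v n hn0 x c hcn hrc, extFn_res u n hn0 x c hcn hrc,
        hzv c hcn, if_neg hce, if_neg hce1]
  -- bad configuration is excluded by the label hypothesis
  have hbadcase : ∀ i, i + 1 ≤ k' → ¬ (j i = j (i+1) + 1 ∧ j (i+1) % (n:ℤ) = (d:ℤ) % n) := by
    rintro i hi ⟨heq, hmod⟩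
    obtain ⟨-, -, h3, -⟩ := hj
    have hcast : ((d:ℤ)) = ((e:ℤ)) + 1 := by push_cast [hd]; ring
    have hx1' : j (i+1) % (n:ℤ) = ((e:ℤ)+1) % n := by rw [hmod, hcast]
    have hr1 : (j (i+1) - 1) % (n:ℤ) = ((e:ℕ):ℤ) % n := sub_one_mod hx1'
    set q : ℤ := (j (i+1) - 1) / n with hqdef
    have hv1 : extFn u n (j (i+1)) = ((cochargeLabeling u).getD e 0 : ℤ) - q :=
      extFn_res u n hn0 _ e (by omega) hr1
    have hr2 : (j i - 1) % (n:ℤ) = ((e+1:ℕ):ℤ) % n := by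
      have hdecomp : j (i+1) - 1 = (n:ℤ) * q + (e:ℕ) := decomp n hn0 _ e (by omega) hr1
      have : j i - 1 = (n:ℤ) * q + ((e+1:ℕ):ℤ) := by push_cast at hdecomp ⊢; linarith
      rw [this, (res_div n hn0 q (e+1) (by omega)).2, mod_self_lt n (e+1) (by omega)]
    have hq2 : (j i - 1) / (n:ℤ) = q := by
      have hdecomp : j (i+1) - 1 = (n:ℤ) * q + (e:ℕ) := decomp n hn0 _ e (by omega) hr1
      have : j i - 1 = (n:ℤ) * q + ((e+1:ℕ):ℤ) := by push_cast at hdecomp ⊢; linarith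
      rw [this, (res_div n hn0 q (e+1) (by omega)).1]
    have hv2 : extFn u n (j i) = ((cochargeLabeling u).getD (e+1) 0 : ℤ) - q := by
      rw [extFn_res u n hn0 _ (e+1) (by omega) hr2, hq2]
    have hev1 := h3 (i+1) hi
    have hev2 := h3 i (by omega)
    rw [hv1] at hev1
    rw [hv2] at hev2
    apply hlab
    rw [hd]
    push_cast at hev1 hev2
    omega
  obtain ⟨h1, h2, h3, h4⟩ := hj
  refine ⟨?_, ?_, ?_, ?_⟩
  · intro i hi
    exact affSwap_le n d hn2 hd1 (by omega) _ (h1 i hi)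
  · intro i hi
    exact affSwap_lt n d hn2 _ _ (h2 i hi) (by
      intro hb
      exact hbadcase i hi ⟨hb.1, hb.2⟩)
  · intro i hi
    rw [hext (j i)]
    exact h3 i hi
  · intro i i' hi hi' hne hmod
    exact h4 i i' hi hi' hne (affSwap_mod_inj n d hn2 _ _ hmod)
end

section
/- For the word w with cocharge labeling equal to the row reading word of Z_λ (reading rows bottom to top: λ_l copies of l-1, ..., λ_2 copies of 1, λ_1 copies of 0, for a partition λ of n with l parts), I_k(w̃) = λ_1 + λ_2 + ... + λ_k for every k ≥ 1. -/
namespace IkAux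

/-- the explicit cocharge labeling list -/
def zl (ν : ℕ → ℕ) (l : ℕ) : List ℕ :=
  ((List.range l).reverse.map (fun i => List.replicate (ν i) i)).flatten

lemma zl_succ (ν : ℕ → ℕ) (l : ℕ) :
    zl ν (l + 1) = List.replicate (ν l) l ++ zl ν l := by
  simp [zl, List.range_succ]

lemma zl_length (ν : ℕ → ℕ) (l : ℕ) :
    (zl ν l).length = ∑ i ∈ Finset.range l, ν i := by
  induction l with
  | zero => simp [zl]
  | succ l ih => rw [zl_succ, Finset.sum_range_succ]; simp [ih]; omega

lemma getD_replicate' (m a p : ℕ) (hp : p < m) :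
    (List.replicate m a).getD p 0 = a := by
  rw [List.getD_eq_getElem _ _ (by simpa using hp)]
  simp

lemma zl_getD_ge (ν : ℕ → ℕ) (l k : ℕ) :
    ∀ p, p < ∑ m ∈ Finset.Ico k l, ν m → k ≤ (zl ν l).getD p 0 := by
  induction l with
  | zero =>
    intro p hp
    rw [Finset.Ico_eq_empty (by omega)] at hp
    simp at hp
  | succ l ih =>
    intro p hp
    rcases le_or_gt (l + 1) k with h | h
    · rw [Finset.Ico_eq_empty (by omega)] at hp
      simp at hp
    · have hk : k ≤ l := by omega
      rw [Finset.sum_Ico_succ_top hk] at hp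
      rw [zl_succ]
      rcases lt_or_ge p (ν l) with h1 | h1
      · rw [List.getD_append _ _ _ _ (by simpa using h1)]
        rw [getD_replicate' _ _ _ h1]
        omega
      · rw [List.getD_append_right _ _ _ _ (by simpa using h1)]
        simp only [List.length_replicate]
        exact ih (p - ν l) (by omega)

lemma zl_getD_eq (ν : ℕ → ℕ) (l : ℕ) :
    ∀ i < l, ∀ c < ν i,
      (zl ν l).getD ((∑ m ∈ Finset.Ico (i + 1) l, ν m) + c) 0 = i := by
  induction l with
  | zero => omega
  | succ l ih =>
    intro i hi c hc
    rw [zl_succ]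
    rcases Nat.lt_succ_iff_lt_or_eq.1 hi with hi' | rfl
    · rw [Finset.sum_Ico_succ_top (by omega : i + 1 ≤ l)]
      have hlen : (List.replicate (ν l) l).length ≤ (∑ m ∈ Finset.Ico (i+1) l, ν m) + ν l + c := by
        simp; omega
      rw [List.getD_append_right _ _ _ _ hlen]
      simp only [List.length_replicate]
      have : (∑ m ∈ Finset.Ico (i+1) l, ν m) + ν l + c - ν l
          = (∑ m ∈ Finset.Ico (i+1) l, ν m) + c := by omega
      rw [this]
      exact ih i hi' c hc
    · rw [Finset.Ico_eq_empty (by omega)]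
      simp only [Finset.sum_empty, Nat.zero_add]
      rw [List.getD_append _ _ _ _ (by simpa using hc)]
      exact getD_replicate' _ _ _ hc

lemma int_eq_of_emod_eq {n : ℕ} (hn : 0 < n) {a b : ℤ} (ha1 : 1 ≤ a) (han : a ≤ (n : ℤ))
    (hb1 : 1 ≤ b) (hbn : b ≤ (n : ℤ)) (h : a % (n : ℤ) = b % (n : ℤ)) : a = b := by
  have hd : (n : ℤ) ∣ b - a := Int.ModEq.dvd h
  have habs : |b - a| < (n : ℤ) := by
    rw [abs_lt]; omega
  have := Int.eq_zero_of_abs_lt_dvd hd habs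
  omega

end IkAux

/-- If the cocharge labeling of the standard word `w` of length `n` is the row
reading word of `Z_λ` for a partition `λ` of `n` with `l` parts (read bottom
to top: `λ_l` copies of `l - 1`, …, `λ_2` copies of `1`, `λ_1` copies of `0`;
parts are 0-indexed here, so `λ_i = ν (i - 1)`), then
`I_k(w̃) = λ_1 + ⋯ + λ_k` for every `k ≥ 1`. -/
theorem Ik_superstandard (n l : ℕ) (ν : ℕ → ℕ) (hν : IsPartitionFn ν)
    (hpos : ∀ i < l, 0 < ν i) (hzero : ∀ i, l ≤ i → ν i = 0)
    (hn : n = ∑ i ∈ Finset.range l, ν i)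
    (w : List ℕ) (hw : IsStandardWord n w)
    (hlab : cochargeLabeling w = ((List.range l).reverse.map
      (fun i => List.replicate (ν i) i)).flatten) :
    ∀ k : ℕ, 1 ≤ k → Ik (extFn w n) n k = ∑ i ∈ Finset.range k, ν i := by
  intro k hk
  have hemod : ∀ a b : ℤ, a.emod b = a % b := fun _ _ => rfl
  rcases Nat.eq_zero_or_pos l with hl0 | hl
  · -- degenerate case: l = 0, n = 0
    subst hl0
    simp only [Finset.range_zero, Finset.sum_empty] at hn
    subst hn
    have hz : cochargeLabeling w = [] := by simpa using hlab
    have hg : ∀ j : ℤ, extFn w 0 j = 0 := by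
      intro j
      simp [extFn, hz]
    have hrhs : ∑ i ∈ Finset.range k, ν i = 0 :=
      Finset.sum_eq_zero fun i _ => hzero i (Nat.zero_le i)
    rw [hrhs]
    have hnb : ¬ BddAbove {m | ∃ A : BddChainFamily (extFn w 0) 0 k, A.size = m} := by
      rintro ⟨N, hN⟩
      have hmem : (N + 1 : ℕ) ∈ {m | ∃ A : BddChainFamily (extFn w 0) 0 k, A.size = m} := by
        refine ⟨⟨N + 1, fun _ => 0, fun t _ => -(t.val : ℤ), ?_, fun _ => hk, ?_⟩, ?_⟩
        · intro t
          refine ⟨?_, ?_, ?_, ?_⟩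
          · intro i _; simp
          · intro i hi
            have hi' : i + 1 ≤ 0 := hi
            omega
          · intro i hi
            have hi' : i ≤ 0 := hi
            have : i = 0 := by omega
            subst this
            simp [hg]
          · intro i i' h1 h2 hne
            have h1' : i ≤ 0 := h1
            have h2' : i' ≤ 0 := h2
            omega
        · intro t t' ht i i' _ _
          simp only [Nat.cast_zero, Int.emod_zero, ne_eq, neg_inj, Nat.cast_inj]
          exact fun h => ht (Fin.ext h)
        · show ((Finset.univ : Finset (Fin (N+1))).biUnion
            (fun t => (Finset.range (0 + 1)).image (fun _ => -(t.val : ℤ)))).card = N + 1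
          rw [Finset.card_biUnion]
          · simp
          · intro t _ t' _ hne
            rw [Function.onFun_apply, Finset.disjoint_left]
            intro x hx hx'
            simp only [Finset.mem_image, Finset.mem_range] at hx hx'
            obtain ⟨i, -, rfl⟩ := hx
            obtain ⟨i', -, h⟩ := hx'
            have : t.val = t'.val := by omega
            exact hne (Fin.ext this)
      have := hN hmem
      omega
    show sSup _ = 0
    rw [csSup_of_not_bddAbove hnb]
    simp
  · -- main case: 0 < l
    have hanti : ∀ {i i' : ℕ}, i ≤ i' → ν i' ≤ ν i := fun h =>
      antitone_nat_of_succ_le hν.1 h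
    have hnu0 : 0 < ν 0 := hpos 0 hl
    have hn1 : 0 < n := by
      have h1 : ν 0 ≤ ∑ i ∈ Finset.range l, ν i :=
        Finset.single_le_sum (fun i _ => Nat.zero_le _) (Finset.mem_range.2 hl)
      omega
    have hltl : ∀ i, 0 < ν i → i < l := by
      intro i h
      by_contra h'
      push_neg at h'
      rw [hzero i h'] at h
      omega
    -- notation
    set B := ∑ i ∈ Finset.range k, ν i with hB
    set T := ∑ m ∈ Finset.Ico k l, ν m with hT
    have hTB : T + B = n := by
      rcases le_or_gt k l with h | h
      · have := Finset.sum_range_add_sum_Ico ν h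
        omega
      · have h1 : T = 0 := by
          rw [hT, Finset.Ico_eq_empty (by omega)]; simp
        have h2 := Finset.sum_range_add_sum_Ico ν h.le
        have h3 : ∑ m ∈ Finset.Ico l k, ν m = 0 :=
          Finset.sum_eq_zero fun m hm => hzero m (Finset.mem_Ico.1 hm).1
        omega
    have hzlab : cochargeLabeling w = IkAux.zl ν l := hlab
    -- upper bound
    have hub : ∀ A : BddChainFamily (extFn w n) n k, A.size ≤ B := by
      intro A
      have hcard : ((Finset.univ : Finset (Fin A.L)).biUnion
          (fun t => (Finset.range (A.len t + 1)).image (A.j t))).card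
          ≤ (Finset.Ico T n).card := by
        apply Finset.card_le_card_of_injOn (fun j => ((j - 1).emod (n : ℤ)).toNat)
        · intro a ha
          simp only [Finset.mem_coe, Finset.mem_biUnion, Finset.mem_image, Finset.mem_range] at ha
          obtain ⟨t, -, i, hi, hji⟩ := ha
          obtain ⟨h1, h2, h3, h4⟩ := A.chain t
          have hval : extFn w n a = (i : ℤ) := by rw [← hji]; exact h3 i (by omega)
          have han : a ≤ (n : ℤ) := by rw [← hji]; exact h1 i (by omega)
          have hik : i < k := by have := A.bdd t; omega
          rw [extFn, hzlab] at hval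
          set p := ((a - 1).emod (n : ℤ)).toNat with hp
          have hpn : ((a - 1).emod (n : ℤ)) < (n : ℤ) :=
            Int.emod_lt_of_pos _ (by exact_mod_cast hn1)
          have hp0 : (0 : ℤ) ≤ (a - 1).emod (n : ℤ) :=
            Int.emod_nonneg _ (by exact_mod_cast hn1.ne')
          have hplt : p < n := by omega
          have hfd : (a - 1).fdiv (n : ℤ) ≤ 0 := by
            rw [Int.fdiv_eq_ediv_of_nonneg _ (by positivity)]
            have h5 : (a - 1) / (n : ℤ) ≤ ((n : ℤ) - 1) / (n : ℤ) :=
              Int.ediv_le_ediv (by exact_mod_cast hn1) (by omega)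
            have h6 : ((n : ℤ) - 1) / (n : ℤ) = 0 :=
              Int.ediv_eq_zero_of_lt (by omega) (by omega)
            omega
          have hgd : (((IkAux.zl ν l).getD p 0 : ℕ) : ℤ) = (i : ℤ) + (a - 1).fdiv (n : ℤ) := by
            omega
          have hgdk : ((IkAux.zl ν l).getD p 0 : ℕ) < k := by
            have : (((IkAux.zl ν l).getD p 0 : ℕ) : ℤ) < (k : ℤ) := by
              rw [hgd]; push_cast; omega
            exact_mod_cast this
          have hTp : T ≤ p := by
            by_contra hcon
            push_neg at hcon
            have := IkAux.zl_getD_ge ν l k p (by omega)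
            omega
          exact Finset.mem_Ico.2 ⟨hTp, hplt⟩
        · intro a ha b hb he
          rw [Finset.mem_coe, Finset.mem_biUnion] at ha hb
          obtain ⟨t, -, ha⟩ := ha
          obtain ⟨t', -, hb⟩ := hb
          rw [Finset.mem_image] at ha hb
          obtain ⟨i, hi, hji⟩ := ha
          obtain ⟨i', hi', hji'⟩ := hb
          rw [Finset.mem_range] at hi hi'
          have he' : ((a - 1) % (n : ℤ)).toNat = ((b - 1) % (n : ℤ)).toNat := he
          have hmod' : (a - 1) % (n : ℤ) = (b - 1) % (n : ℤ) := by
            have h0a : (0 : ℤ) ≤ (a - 1).emod (n : ℤ) :=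
              Int.emod_nonneg _ (by exact_mod_cast hn1.ne')
            have h0b : (0 : ℤ) ≤ (b - 1).emod (n : ℤ) :=
              Int.emod_nonneg _ (by exact_mod_cast hn1.ne')
            have h0a' : (0 : ℤ) ≤ (a - 1) % (n : ℤ) := h0a
            have h0b' : (0 : ℤ) ≤ (b - 1) % (n : ℤ) := h0b
            omega
          have hmod : a % (n : ℤ) = b % (n : ℤ) := by
            have e1 : a % (n : ℤ) = ((a - 1) % (n : ℤ) + 1 % (n : ℤ)) % (n : ℤ) := by
              rw [← Int.add_emod]; ring_nf
            have e2 : b % (n : ℤ) = ((b - 1) % (n : ℤ) + 1 % (n : ℤ)) % (n : ℤ) := by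
              rw [← Int.add_emod]; ring_nf
            rw [e1, e2, hmod']
          by_contra hne
          rcases eq_or_ne t t' with rfl | htt
          · have hii : i ≠ i' := by
              rintro rfl
              rw [← hji, ← hji'] at hne
              exact hne rfl
            exact (A.chain t).2.2.2 i i' (by omega) (by omega) hii
              (by rw [hji, hji']; exact hmod)
          · exact A.disj t t' htt i i' (by omega) (by omega)
              (by rw [hji, hji']; exact hmod)
      calc A.size ≤ (Finset.Ico T n).card := hcard
        _ = B := by rw [Nat.card_Ico]; omega
    -- lower bound construction
    set SS : ℕ → ℕ := fun i => ∑ m ∈ Finset.Ico (i + 1) l, ν m with hSS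
    set H : ℕ → ℕ := fun c => ((Finset.range k).filter (fun i => c < ν i)).card with hHdef
    have hHle : ∀ c, H c ≤ k := fun c =>
      le_trans (Finset.card_filter_le _ _) (by simp)
    have hHiff : ∀ c i, c < ν 0 → (i < H c ↔ i < k ∧ c < ν i) := by
      intro c i hc
      constructor
      · intro h
        by_contra hcon
        rw [Decidable.not_and_iff_or_not] at hcon
        have hsub : (Finset.range k).filter (fun m => c < ν m) ⊆ Finset.range i := by
          intro m hm
          simp only [Finset.mem_filter, Finset.mem_range] at hm ⊢
          by_contra hmi
          push_neg at hmi
          rcases hcon with hik | hci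
          · push_neg at hik; omega
          · push_neg at hci
            have : ν m ≤ ν i := hanti hmi
            omega
        have := Finset.card_le_card hsub
        simp only [Finset.card_range] at this
        have h' : i < ((Finset.range k).filter (fun m => c < ν m)).card := h
        omega
      · rintro ⟨hik, hci⟩
        have hsub : Finset.range (i + 1) ⊆ (Finset.range k).filter (fun m => c < ν m) := by
          intro m hm
          simp only [Finset.mem_range] at hm
          simp only [Finset.mem_filter, Finset.mem_range]
          exact ⟨by omega, lt_of_lt_of_le hci (hanti (by omega))⟩
        have := Finset.card_le_card hsub
        simp only [Finset.card_range] at this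
        show i < ((Finset.range k).filter (fun m => c < ν m)).card
        omega
    have hH0 : ∀ c, c < ν 0 → 0 < H c := fun c hc =>
      (hHiff c 0 hc).2 ⟨by omega, hc⟩
    have hSSblock : ∀ i, i < l → SS i + ν i ≤ n := by
      intro i hi
      have h1 : ∑ m ∈ Finset.Ico i l, ν m = ν i + SS i :=
        Finset.sum_eq_sum_Ico_succ_bot hi ν
      have h2 : ∑ m ∈ Finset.Ico i l, ν m ≤ ∑ m ∈ Finset.Ico 0 l, ν m :=
        Finset.sum_le_sum_of_subset (Finset.Ico_subset_Ico (Nat.zero_le i) le_rfl)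
      rw [← Finset.range_eq_Ico] at h2
      omega
    have hSSmono : ∀ i i', i < i' → i' < l → SS i' + ν i' ≤ SS i := by
      intro i i' h hi'
      have h1 : ∑ m ∈ Finset.Ico i' l, ν m = ν i' + SS i' :=
        Finset.sum_eq_sum_Ico_succ_bot hi' ν
      have h2 : ∑ m ∈ Finset.Ico i' l, ν m ≤ SS i :=
        Finset.sum_le_sum_of_subset (Finset.Ico_subset_Ico (by omega) le_rfl)
      omega
    have hval : ∀ i c, i < l → c < ν i → extFn w n (((SS i + 1 + c : ℕ) : ℤ)) = (i : ℤ) := by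
      intro i c hi hc
      have hle : SS i + 1 + c ≤ n := by
        have := hSSblock i hi
        omega
      rw [extFn, hzlab]
      have e1 : (((SS i + 1 + c : ℕ) : ℤ) - 1) = ((SS i + c : ℕ) : ℤ) := by push_cast; ring
      rw [e1]
      have e2 : ((SS i + c : ℕ) : ℤ).emod (n : ℤ) = ((SS i + c : ℕ) : ℤ) := by
        rw [hemod]
        exact Int.emod_eq_of_lt (by positivity) (by exact_mod_cast (by omega : SS i + c < n))
      rw [e2, Int.toNat_natCast]
      rw [IkAux.zl_getD_eq ν l i hi c hc]
      rw [Int.fdiv_eq_ediv_of_nonneg _ (by positivity),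
        Int.ediv_eq_zero_of_lt (by positivity) (by exact_mod_cast (by omega : SS i + c < n))]
      ring
    have hposne : ∀ i c i' c', i < l → c < ν i → i' < l → c' < ν i' →
        (i ≠ i' ∨ c ≠ c') → SS i + 1 + c ≠ SS i' + 1 + c' := by
      intro i c i' c' hi hc hi' hc' hne heq
      rcases Nat.lt_trichotomy i i' with h | rfl | h
      · have := hSSmono i i' h hi'
        omega
      · rcases hne with h | h
        · omega
        · omega
      · have := hSSmono i' i h hi
        omega
    have hresne : ∀ a b : ℕ, 1 ≤ a → a ≤ n → 1 ≤ b → b ≤ n → a ≠ b →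
        ((a : ℤ)) % (n : ℤ) ≠ ((b : ℤ)) % (n : ℤ) := by
      intro a b h1 h2 h3 h4 hab h
      have := IkAux.int_eq_of_emod_eq hn1 (a := (a : ℤ)) (b := (b : ℤ))
        (by exact_mod_cast h1) (by exact_mod_cast h2)
        (by exact_mod_cast h3) (by exact_mod_cast h4) h
      exact hab (by exact_mod_cast this)
    -- facts about indices in chains
    have hfacts : ∀ (c : Fin (ν 0)) i, i ≤ H c.val - 1 → i < k ∧ c.val < ν i ∧ i < l := by
      intro c i hi
      have h0 := hH0 c.val c.isLt
      have h1 : i < H c.val := by omega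
      obtain ⟨h2, h3⟩ := (hHiff c.val i c.isLt).1 h1
      exact ⟨h2, h3, hltl i (by omega)⟩
    obtain ⟨F, hF⟩ : ∃ A : BddChainFamily (extFn w n) n k, A.size = B := by
      refine ⟨⟨ν 0, fun c => H c.val - 1, fun c i => ((SS i + 1 + c.val : ℕ) : ℤ),
        ?_, ?_, ?_⟩, ?_⟩
      · intro c
        refine ⟨?_, ?_, ?_, ?_⟩
        · intro i hi
          obtain ⟨-, h3, h2⟩ := hfacts c i hi
          have := hSSblock i h2
          show ((SS i + 1 + c.val : ℕ) : ℤ) ≤ ((n : ℕ) : ℤ)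
          exact_mod_cast (by omega : SS i + 1 + c.val ≤ n)
        · intro i hi
          obtain ⟨-, h3, h2⟩ := hfacts c (i + 1) hi
          have := hSSmono i (i + 1) (by omega) h2
          show ((SS (i + 1) + 1 + c.val : ℕ) : ℤ) < ((SS i + 1 + c.val : ℕ) : ℤ)
          exact_mod_cast (by omega : SS (i + 1) + 1 + c.val < SS i + 1 + c.val)
        · intro i hi
          obtain ⟨-, h3, h2⟩ := hfacts c i hi
          exact hval i c.val h2 h3
        · intro i i' hi hi' hne
          obtain ⟨-, h3, h2⟩ := hfacts c i hi
          obtain ⟨-, h3', h2'⟩ := hfacts c i' hi'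
          have ha := hSSblock i h2
          have hb := hSSblock i' h2'
          exact hresne _ _ (by omega) (by omega) (by omega) (by omega)
            (hposne i c.val i' c.val h2 h3 h2' h3' (Or.inl hne))
      · intro c
        have h1 := hH0 c.val c.isLt
        have h2 := hHle c.val
        show H c.val - 1 + 1 ≤ k
        omega
      · intro t t' htt i i' hi hi'
        obtain ⟨-, h3, h2⟩ := hfacts t i hi
        obtain ⟨-, h3', h2'⟩ := hfacts t' i' hi'
        have ha := hSSblock i h2
        have hb := hSSblock i' h2'
        have hcc : t.val ≠ t'.val := fun h => htt (Fin.ext h)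
        exact hresne _ _ (by omega) (by omega) (by omega) (by omega)
          (hposne i t.val i' t'.val h2 h3 h2' h3' (Or.inr hcc))
      · -- size computation
        show ((Finset.univ : Finset (Fin (ν 0))).biUnion
          (fun t => (Finset.range (H t.val - 1 + 1)).image
            (fun i => ((SS i + 1 + t.val : ℕ) : ℤ)))).card = B
        rw [Finset.card_biUnion]
        · have hone : ∀ t : Fin (ν 0),
              ((Finset.range (H t.val - 1 + 1)).image
                (fun i => ((SS i + 1 + t.val : ℕ) : ℤ))).card = H t.val := by
            intro t
            rw [Finset.card_image_of_injOn, Finset.card_range]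
            · have := hH0 t.val t.isLt; omega
            · intro a ha b hb he
              simp only [Finset.coe_range, Set.mem_Iio] at ha hb
              obtain ⟨-, h3, h2⟩ := hfacts t a (by omega)
              obtain ⟨-, h3', h2'⟩ := hfacts t b (by omega)
              by_contra hab
              have he' : ((SS a + 1 + t.val : ℕ) : ℤ) = ((SS b + 1 + t.val : ℕ) : ℤ) := he
              exact hposne a t.val b t.val h2 h3 h2' h3' (Or.inl hab)
                (by exact_mod_cast he')
          rw [Finset.sum_congr rfl (fun t _ => hone t)]
          rw [Fin.sum_univ_eq_sum_range (fun c => H c) (ν 0)]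
          -- double counting
          have h1 : ∀ c, H c = ∑ i ∈ Finset.range k, (if c < ν i then 1 else 0) := by
            intro c
            exact Finset.card_filter (fun i => c < ν i) (Finset.range k)
          rw [Finset.sum_congr rfl (fun c _ => h1 c), Finset.sum_comm]
          rw [hB]
          apply Finset.sum_congr rfl
          intro i hi
          rw [← Finset.card_filter]
          have : (Finset.range (ν 0)).filter (fun c => c < ν i) = Finset.range (ν i) := by
            ext c
            simp only [Finset.mem_filter, Finset.mem_range]
            have : ν i ≤ ν 0 := hanti (Nat.zero_le i)
            omega
          rw [this, Finset.card_range]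
        · intro t ht t' htt hne
          rw [Function.onFun_apply, Finset.disjoint_left]
          intro a hat hat'
          simp only [Finset.mem_image, Finset.mem_range] at hat hat'
          obtain ⟨i, hi, hai⟩ := hat
          obtain ⟨i', hi', hai'⟩ := hat'
          obtain ⟨-, h3, h2⟩ := hfacts t i (by omega)
          obtain ⟨-, h3', h2'⟩ := hfacts t' i' (by omega)
          have hcc : t.val ≠ t'.val := fun h => hne (Fin.ext h)
          apply hposne i t.val i' t'.val h2 h3 h2' h3' (Or.inr hcc)
          have : ((SS i + 1 + t.val : ℕ) : ℤ) = ((SS i' + 1 + t'.val : ℕ) : ℤ) := by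
            rw [hai, hai']
          exact_mod_cast this
    -- conclude
    have hmem : B ∈ {m | ∃ A : BddChainFamily (extFn w n) n k, A.size = m} := ⟨F, hF⟩
    have hbdd : BddAbove {m | ∃ A : BddChainFamily (extFn w n) n k, A.size = m} := by
      refine ⟨B, ?_⟩
      rintro m ⟨A, rfl⟩
      exact hub A
    show sSup {m | ∃ A : BddChainFamily (extFn w n) n k, A.size = m} = B
    refine le_antisymm (csSup_le ⟨B, hmem⟩ ?_) (le_csSup hbdd hmem)
    rintro m ⟨A, rfl⟩
    exact hub A
end

section
/- Let u be a standard word and v = u s_i a Knuth transformation of u (i.e., u and v differ by a single Knuth move on three consecutive letters). Then cocharge(u) = cocharge(v). -/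
/-- An elementary Knuth transformation: replace a consecutive factor `y x z`
by `y z x` when `x < y ≤ z`, or a factor `x z y` by `z x y` when `x ≤ y < z`. -/
def KnuthMove (u v : List ℕ) : Prop :=
  ∃ (p s : List ℕ) (x y z : ℕ),
    (u = p ++ [y, x, z] ++ s ∧ v = p ++ [y, z, x] ++ s ∧ x < y ∧ y ≤ z) ∨
    (u = p ++ [x, z, y] ++ s ∧ v = p ++ [z, x, y] ++ s ∧ x ≤ y ∧ y < z)

/-- Explicit formula for `indexOf` in a word with a distinguished factor of length 3. -/
lemma indexOf_mid (p s : List ℕ) (a b c m : ℕ) :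
    (p ++ [a, b, c] ++ s).idxOf m =
      if m ∈ p then p.idxOf m
      else if m = a then p.length
      else if m = b then p.length + 1
      else if m = c then p.length + 2
      else p.length + 3 + s.idxOf m := by
  rw [List.append_assoc]
  by_cases hp : m ∈ p
  · simp [hp, List.idxOf_append_of_mem hp]
  · rw [List.idxOf_append_of_notMem hp, if_neg hp]
    by_cases ha : m = a
    · simp [List.idxOf_cons_eq _ ha.symm, ha]
    · rw [if_neg ha, show ([a,b,c] ++ s) = a :: ([b,c] ++ s) from rfl,
        List.idxOf_cons_ne _ (Ne.symm ha)]
      by_cases hb : m = b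
      · simp [List.idxOf_cons_eq _ hb.symm, hb]
      · rw [if_neg hb, show ([b,c] ++ s) = b :: ([c] ++ s) from rfl,
          List.idxOf_cons_ne _ (Ne.symm hb)]
        by_cases hc : m = c
        · simp [List.idxOf_cons_eq _ hc.symm, hc]
        · rw [if_neg hc, show ([c] ++ s) = c :: s from rfl,
            List.idxOf_cons_ne _ (Ne.symm hc)]
          omega

/-- If two words induce the same "descent" comparisons on consecutive entries,
they have the same entry labels. -/
lemma entryLabel_congr {u v : List ℕ}
    (h : ∀ k : ℕ, u.idxOf (k + 2) < u.idxOf (k + 1) ↔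
        v.idxOf (k + 2) < v.idxOf (k + 1)) :
    entryLabel u = entryLabel v := by
  funext i
  induction i with
  | zero => rfl
  | succ i ih =>
    match i, ih with
    | 0, _ => rfl
    | Nat.succ j, ih =>
      simp only [entryLabel, ih, h j]

lemma cocharge_congr {u v : List ℕ} (hp : u.Perm v)
    (he : entryLabel u = entryLabel v) : cocharge u = cocharge v := by
  unfold cocharge cochargeLabeling
  rw [he]
  exact (hp.map (entryLabel v)).sum_eq

/-- Key index facts for an adjacent swap of `x` and `z` at positions `L+1, L+2`. -/
lemma key_swap1 (p s : List ℕ) (x y z : ℕ) (hxp : x ∉ p) (hzp : z ∉ p)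
    (hxy : x ≠ y) (hzy : z ≠ y) (hxz : x ≠ z) (m : ℕ) :
    (m = x ∧ (p ++ [y,x,z] ++ s).idxOf m = p.length + 1 ∧
        (p ++ [y,z,x] ++ s).idxOf m = p.length + 2) ∨
    (m = z ∧ (p ++ [y,x,z] ++ s).idxOf m = p.length + 2 ∧
        (p ++ [y,z,x] ++ s).idxOf m = p.length + 1) ∨
    (m ≠ x ∧ m ≠ z ∧ (p ++ [y,x,z] ++ s).idxOf m = (p ++ [y,z,x] ++ s).idxOf m ∧
        (p ++ [y,x,z] ++ s).idxOf m ≠ p.length + 1 ∧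
        (p ++ [y,x,z] ++ s).idxOf m ≠ p.length + 2) := by
  rw [indexOf_mid, indexOf_mid]
  by_cases hmx : m = x
  · subst hmx
    simp only [if_neg hxp, if_neg hxy, if_pos rfl, if_neg hxz]
    tauto
  · by_cases hmz : m = z
    · subst hmz
      simp only [if_neg hzp, if_neg hzy, if_neg (Ne.symm hxz), if_pos rfl]
      tauto
    · right; right
      refine ⟨hmx, hmz, ?_⟩
      by_cases hp : m ∈ p
      · have h1 := List.idxOf_lt_length_iff.2 hp
        simp only [if_pos hp]
        exact ⟨trivial, by omega, by omega⟩
      · simp only [if_neg hp, if_neg hmx, if_neg hmz]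
        by_cases hy : m = y
        · simp only [if_pos hy]
          exact ⟨trivial, by omega, by omega⟩
        · simp only [if_neg hy]
          exact ⟨trivial, by omega, by omega⟩

/-- Key index facts for an adjacent swap of `x` and `z` at positions `L, L+1`. -/
lemma key_swap2 (p s : List ℕ) (x y z : ℕ) (hxp : x ∉ p) (hzp : z ∉ p)
    (hxy : x ≠ y) (hzy : z ≠ y) (hxz : x ≠ z) (m : ℕ) :
    (m = x ∧ (p ++ [x,z,y] ++ s).idxOf m = p.length ∧
        (p ++ [z,x,y] ++ s).idxOf m = p.length + 1) ∨
    (m = z ∧ (p ++ [x,z,y] ++ s).idxOf m = p.length + 1 ∧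
        (p ++ [z,x,y] ++ s).idxOf m = p.length) ∨
    (m ≠ x ∧ m ≠ z ∧ (p ++ [x,z,y] ++ s).idxOf m = (p ++ [z,x,y] ++ s).idxOf m ∧
        (p ++ [x,z,y] ++ s).idxOf m ≠ p.length ∧
        (p ++ [x,z,y] ++ s).idxOf m ≠ p.length + 1) := by
  rw [indexOf_mid, indexOf_mid]
  by_cases hmx : m = x
  · subst hmx
    simp only [if_neg hxp, if_pos rfl, if_neg hxz]
    tauto
  · by_cases hmz : m = z
    · subst hmz
      simp only [if_neg hzp, if_neg (Ne.symm hxz), if_pos rfl]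
      tauto
    · right; right
      refine ⟨hmx, hmz, ?_⟩
      by_cases hp : m ∈ p
      · have h1 := List.idxOf_lt_length_iff.2 hp
        simp only [if_pos hp]
        exact ⟨trivial, by omega, by omega⟩
      · simp only [if_neg hp, if_neg hmx, if_neg hmz]
        by_cases hy : m = y
        · simp only [if_pos hy]
          exact ⟨trivial, by omega, by omega⟩
        · simp only [if_neg hy]
          exact ⟨trivial, by omega, by omega⟩

lemma cocharge_case1 (p s : List ℕ) (x y z : ℕ)
    (hnd : (p ++ [y, x, z] ++ s).Nodup) (hxy : x < y) (hyz : y ≤ z) :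
    cocharge (p ++ [y, x, z] ++ s) = cocharge (p ++ [y, z, x] ++ s) := by
  simp [List.nodup_append, List.nodup_cons] at hnd
  obtain ⟨-, ⟨⟨-, hyz', -⟩, ⟨hxz', -⟩, -, -⟩, hP⟩ := hnd
  have hxp : x ∉ p := fun h => (hP x h).2.1 rfl
  have hzp : z ∉ p := fun h => (hP z h).2.2.1 rfl
  have hperm : (p ++ [y,x,z] ++ s).Perm (p ++ [y,z,x] ++ s) :=
    List.Perm.append_right s (List.Perm.append_left p ((List.Perm.swap z x []).cons y))
  refine cocharge_congr hperm (entryLabel_congr ?_)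
  intro k
  have h1 := key_swap1 p s x y z hxp hzp (by omega) (Ne.symm hyz') hxz' (k + 1)
  have h2 := key_swap1 p s x y z hxp hzp (by omega) (Ne.symm hyz') hxz' (k + 2)
  have hz2 : x + 2 ≤ z := by
    rcases Nat.lt_or_ge z (x + 2) with h | h
    · exfalso; exact hyz' (by omega)
    · exact h
  omega

lemma cocharge_case2 (p s : List ℕ) (x y z : ℕ)
    (hnd : (p ++ [x, z, y] ++ s).Nodup) (hxy : x ≤ y) (hyz : y < z) :
    cocharge (p ++ [x, z, y] ++ s) = cocharge (p ++ [z, x, y] ++ s) := by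
  simp [List.nodup_append, List.nodup_cons] at hnd
  obtain ⟨-, ⟨⟨hxz', hxy', -⟩, ⟨hzy', -⟩, -, -⟩, hP⟩ := hnd
  have hxp : x ∉ p := fun h => (hP x h).1 rfl
  have hzp : z ∉ p := fun h => (hP z h).2.1 rfl
  have hperm : (p ++ [x,z,y] ++ s).Perm (p ++ [z,x,y] ++ s) :=
    List.Perm.append_right s (List.Perm.append_left p (List.Perm.swap z x [y]))
  refine cocharge_congr hperm (entryLabel_congr ?_)
  intro k
  have h1 := key_swap2 p s x y z hxp hzp hxy' (by omega) hxz' (k + 1)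
  have h2 := key_swap2 p s x y z hxp hzp hxy' (by omega) hxz' (k + 2)
  have hz2 : x + 2 ≤ z := by
    rcases Nat.lt_or_ge z (x + 2) with h | h
    · exfalso; exact hxy' (by omega)
    · exact h
  omega

/-- A Knuth move yields a permutation of the original word. -/
lemma knuthMove_perm {u v : List ℕ} (h : KnuthMove u v) : u.Perm v := by
  obtain ⟨p, s, x, y, z, ⟨hu, hv, -, -⟩ | ⟨hu, hv, -, -⟩⟩ := h <;> subst hu <;> subst hv
  · exact List.Perm.append_right s (List.Perm.append_left p ((List.Perm.swap z x []).cons y))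
  · exact List.Perm.append_right s (List.Perm.append_left p (List.Perm.swap z x [y]))

/-- Cocharge invariance for a single (forward) Knuth move on a duplicate-free word. -/
lemma cocharge_knuthMove {u v : List ℕ} (hnd : u.Nodup) (h : KnuthMove u v) :
    cocharge u = cocharge v := by
  obtain ⟨p, s, x, y, z, ⟨hu, hv, h1, h2⟩ | ⟨hu, hv, h1, h2⟩⟩ := h <;> subst hu <;> subst hv
  · exact cocharge_case1 p s x y z hnd h1 h2
  · exact cocharge_case2 p s x y z hnd h1 h2

/-- Knuth transformations preserve cocharge: if the standard words `u` and `v`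
differ by a single elementary Knuth transformation (in either direction), then
`cocharge u = cocharge v`. -/
theorem cocharge_knuth (n : ℕ) (u v : List ℕ) (hu : IsStandardWord n u)
    (h : KnuthMove u v ∨ KnuthMove v u) : cocharge u = cocharge v := by
  have hnd : u.Nodup := by
    refine hu.symm.nodup ?_
    exact (List.nodup_range : (List.range n).Nodup).map (fun a b hab => by omega)
  rcases h with h | h
  · exact cocharge_knuthMove hnd h
  · have hndv : v.Nodup := ((knuthMove_perm h).symm.nodup hnd : _)
    exact (cocharge_knuthMove hndv h).symm
end
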